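/- arXiv:1911.02824 — 7 statements merged into one kernel-verified Lean document; each statement's English description precedes it below -/
import Mathlib

section
/- For every positive integer n, n! < √(2π) · ((n + 1/2)/e)^(n + 1/2). -/
open Real Nat Filter Topology

lemma log_lt_poly3 (x : ℝ) (hx : 0 < x) :
    Real.log (1+x) < x - x^2/2 + x^3/3 := by
  have key : StrictMonoOn (fun y : ℝ => y - y^2/2 + y^3/3 - Real.log (1+y)) (Set.Ici 0) := by
    apply strictMonoOn_of_deriv_pos (convex_Ici 0)
    · apply ContinuousOn.sub (by fun_prop)
      exact ContinuousOn.log (by fun_prop) (fun y hy => by simp at hy; positivity)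
    · intro y hy
      rw [interior_Ici] at hy
      have hy0 : 0 < y := hy
      have h1 : (0:ℝ) < 1 + y := by linarith
      have hlog : HasDerivAt (fun y:ℝ => Real.log (1+y)) (1/(1+y)) y := by
        have h := (Real.hasDerivAt_log h1.ne').comp y ((hasDerivAt_id y).const_add 1)
        simpa [Function.comp_def] using h
      have hp : HasDerivAt (fun y:ℝ => y - y^2/2 + y^3/3) (1 - (2*y)/2 + (3*y^2)/3) y := by
        have := ((hasDerivAt_id y).sub ((hasDerivAt_pow 2 y).div_const 2)).add
          ((hasDerivAt_pow 3 y).div_const 3)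
        simpa [Pi.add_def, Pi.sub_def] using this
      have hd : HasDerivAt (fun y : ℝ => y - y^2/2 + y^3/3 - Real.log (1+y)) _ y := hp.sub hlog
      rw [hd.deriv]
      have : 1/(1+y) < 1 - (2*y)/2 + (3*y^2)/3 := by
        rw [div_lt_iff₀ h1]; nlinarith [pow_pos hy0 3]
      linarith
  have h := key (Set.self_mem_Ici) (Set.mem_Ici.2 hx.le) hx
  simp only [Real.log_one, add_zero] at h
  norm_num at h
  linarith

lemma log_lt_poly7 (x : ℝ) (hx : 0 < x) :
    Real.log (1+x) < x - x^2/2 + x^3/3 - x^4/4 + x^5/5 - x^6/6 + x^7/7 := by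
  have key : StrictMonoOn (fun y : ℝ =>
      y - y^2/2 + y^3/3 - y^4/4 + y^5/5 - y^6/6 + y^7/7 - Real.log (1+y)) (Set.Ici 0) := by
    apply strictMonoOn_of_deriv_pos (convex_Ici 0)
    · apply ContinuousOn.sub (by fun_prop)
      exact ContinuousOn.log (by fun_prop) (fun y hy => by simp at hy; positivity)
    · intro y hy
      rw [interior_Ici] at hy
      have hy0 : 0 < y := hy
      have h1 : (0:ℝ) < 1 + y := by linarith
      have hlog : HasDerivAt (fun y:ℝ => Real.log (1+y)) (1/(1+y)) y := by
        have h := (Real.hasDerivAt_log h1.ne').comp y ((hasDerivAt_id y).const_add 1)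
        simpa [Function.comp_def] using h
      have hp : HasDerivAt (fun y:ℝ => y - y^2/2 + y^3/3 - y^4/4 + y^5/5 - y^6/6 + y^7/7)
          (1 - (2*y)/2 + (3*y^2)/3 - (4*y^3)/4 + (5*y^4)/5 - (6*y^5)/6 + (7*y^6)/7) y := by
        have h' := (((((((hasDerivAt_id y).sub ((hasDerivAt_pow 2 y).div_const 2)).add ((hasDerivAt_pow 3 y).div_const 3)).sub ((hasDerivAt_pow 4 y).div_const 4)).add ((hasDerivAt_pow 5 y).div_const 5)).sub ((hasDerivAt_pow 6 y).div_const 6)).add ((hasDerivAt_pow 7 y).div_const 7))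
        simpa [Pi.add_def, Pi.sub_def] using h'
      have hd : HasDerivAt (fun y : ℝ =>
          y - y^2/2 + y^3/3 - y^4/4 + y^5/5 - y^6/6 + y^7/7 - Real.log (1+y)) _ y := hp.sub hlog
      rw [hd.deriv]
      have : 1/(1+y) < 1 - (2*y)/2 + (3*y^2)/3 - (4*y^3)/4 + (5*y^4)/5 - (6*y^5)/6 + (7*y^6)/7 := by
        rw [div_lt_iff₀ h1]; nlinarith [pow_pos hy0 7]
      linarith
  have h := key (Set.self_mem_Ici) (Set.mem_Ici.2 hx.le) hx
  simp only [Real.log_one, add_zero] at h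
  norm_num at h
  linarith

lemma key_log (t : ℝ) (ht0 : 0 < t) (ht1 : t ≤ 2/3) :
    Real.log (1+t) + t * Real.log (1 + t/(2+t)) < t := by
  have h2 : (0:ℝ) < 2 + t := by linarith
  have hs0 : 0 < t/(2+t) := by positivity
  have h7 := log_lt_poly7 t ht0
  have h3 := log_lt_poly3 (t/(2+t)) hs0
  have hb : t * Real.log (1+t/(2+t)) <
      t * ((t/(2+t)) - (t/(2+t))^2/2 + (t/(2+t))^3/3) := mul_lt_mul_of_pos_left h3 ht0
  have hfin : (t - t^2/2 + t^3/3 - t^4/4 + t^5/5 - t^6/6 + t^7/7)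
      + t * ((t/(2+t)) - (t/(2+t))^2/2 + (t/(2+t))^3/3) < t := by
    have hmul : ((t - t^2/2 + t^3/3 - t^4/4 + t^5/5 - t^6/6 + t^7/7)
        + t * ((t/(2+t)) - (t/(2+t))^2/2 + (t/(2+t))^3/3)) * (2+t)^3
        < t * (2+t)^3 := by
      have e : ((t - t^2/2 + t^3/3 - t^4/4 + t^5/5 - t^6/6 + t^7/7)
          + t * ((t/(2+t)) - (t/(2+t))^2/2 + (t/(2+t))^3/3)) * (2+t)^3
          = (t - t^2/2 + t^3/3 - t^4/4 + t^5/5 - t^6/6 + t^7/7) * (2+t)^3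
            + t * (t*(2+t)^2 - t^2*(2+t)/2 + t^3/3) := by
        field_simp
      rw [e]
      nlinarith [mul_nonneg (sub_nonneg.2 ht1) (pow_nonneg ht0.le 2),
        mul_nonneg (sub_nonneg.2 ht1) (pow_nonneg ht0.le 3),
        mul_nonneg (sub_nonneg.2 ht1) (pow_nonneg ht0.le 4),
        mul_nonneg (sub_nonneg.2 ht1) (pow_nonneg ht0.le 5),
        mul_nonneg (sub_nonneg.2 ht1) (pow_nonneg ht0.le 6),
        mul_nonneg (sub_nonneg.2 ht1) (pow_nonneg ht0.le 7),
        mul_nonneg (sub_nonneg.2 ht1) (pow_nonneg ht0.le 8),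
        pow_pos ht0 2, pow_pos ht0 3, pow_pos ht0 9]
    exact lt_of_mul_lt_mul_right hmul (by positivity)
  linarith

lemma keymul (a : ℝ) (ha : 3/2 ≤ a) :
    (1+1/a)^a * (a+1) < Real.exp 1 * (a+1/2) := by
  have ha0 : 0 < a := by linarith
  have hb : (0:ℝ) < 1 + 1/a := by positivity
  have ht0 : 0 < 1/a := by positivity
  have ht1 : 1/a ≤ 2/3 := by
    rw [div_le_div_iff₀ ha0 (by norm_num)]; linarith
  have hlog := key_log (1/a) ht0 ht1
  have hs' : (1:ℝ) + (1/a)/(2+1/a) = (a+1)/(a+1/2) := by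
    field_simp
    ring
  have hseq : Real.log (1 + (1/a)/(2+1/a)) = Real.log (a+1) - Real.log (a+1/2) := by
    rw [hs', Real.log_div (by linarith) (by linarith)]
  have H := mul_lt_mul_of_pos_left hlog ha0
  rw [mul_add, ← mul_assoc, mul_one_div_cancel ha0.ne', one_mul] at H
  have h1 : (1+1/a)^a * (a+1) = Real.exp (a * Real.log (1+1/a) + Real.log (a+1)) := by
    rw [Real.exp_add, Real.exp_log (by linarith), Real.rpow_def_of_pos hb]
    ring
  have h2 : Real.exp 1 * (a+1/2) = Real.exp (1 + Real.log (a+1/2)) := by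
    rw [Real.exp_add, Real.exp_log (by linarith)]
  rw [h1, h2, Real.exp_lt_exp]
  rw [hseq] at H
  linarith

lemma keymul' (n : ℕ) :
    (1+1/((n:ℝ)+1/2))^((n:ℝ)+1/2) * (((n:ℝ)+1/2)+1) < Real.exp 1 * (((n:ℝ)+1/2)+1/2) := by
  rcases n with _ | m
  · norm_num
    have h2 : (3:ℝ) ^ ((1:ℝ)/2) = Real.sqrt 3 := (Real.sqrt_eq_rpow 3).symm
    have h3 : Real.sqrt 3 < 7/4 := by
      rw [show (7:ℝ)/4 = Real.sqrt ((7/4)^2) by rw [Real.sqrt_sq (by norm_num)]]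
      apply Real.sqrt_lt_sqrt (by norm_num)
      norm_num
    have h4 := Real.exp_one_gt_d9
    calc (3:ℝ) ^ ((1:ℝ)/2) * (3/2) = Real.sqrt 3 * (3/2) := by rw [h2]
      _ < (7/4) * (3/2) := by nlinarith [Real.sqrt_nonneg 3]
      _ < Real.exp 1 := by norm_num at h4 ⊢; linarith
  · apply keymul
    have : (1:ℝ) ≤ (m+1 : ℕ) := by exact_mod_cast Nat.one_le_iff_ne_zero.2 (Nat.succ_ne_zero m)
    push_cast
    push_cast at this
    linarith

noncomputable def dd (n : ℕ) : ℝ :=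
  (n ! : ℝ) / ((((n:ℝ) + 1/2) / Real.exp 1) ^ ((n:ℝ) + 1/2))

lemma dd_lt_succ (n : ℕ) : dd n < dd (n+1) := by
  have key := keymul' n
  set a : ℝ := (n:ℝ)+1/2 with hadef
  have ha0 : 0 < a := by positivity
  have he : (0:ℝ) < Real.exp 1 := Real.exp_pos 1
  have hden1 : (0:ℝ) < (a / Real.exp 1) ^ a := Real.rpow_pos_of_pos (by positivity) _
  have hden2 : (0:ℝ) < ((a+1) / Real.exp 1) ^ (a+1) := Real.rpow_pos_of_pos (by positivity) _
  have hcast : ((n:ℝ)+1)+1/2 = a + 1 := by rw [hadef]; ring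
  rw [dd, dd]
  push_cast
  rw [hcast, div_lt_div_iff₀ hden1 hden2]
  have hfact : (0:ℝ) < (n ! : ℝ) := by exact_mod_cast Nat.factorial_pos n
  have hstep : ((a+1) / Real.exp 1) ^ (a+1) < (a+1/2) * (a / Real.exp 1) ^ a := by
    have e1 : ((a+1) / Real.exp 1) ^ (a+1) = ((a+1)/Real.exp 1)^a * ((a+1)/Real.exp 1) := by
      rw [Real.rpow_add (by positivity), Real.rpow_one]
    have e2 : ((a+1)/Real.exp 1)^(a:ℝ) = (1+1/a)^a * (a/Real.exp 1)^a := by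
      rw [← Real.mul_rpow (by positivity) (by positivity)]
      congr 1
      field_simp
    rw [e1, e2]
    have hpos : (0:ℝ) < (a/Real.exp 1)^a := hden1
    calc (1+1/a)^a * (a/Real.exp 1)^a * ((a+1)/Real.exp 1)
        = ((1+1/a)^a * (a+1)) * ((a/Real.exp 1)^a / Real.exp 1) := by ring
      _ < (Real.exp 1 * (a+1/2)) * ((a/Real.exp 1)^a / Real.exp 1) := by
          apply mul_lt_mul_of_pos_right key (by positivity)
      _ = (a+1/2) * (a/Real.exp 1)^a := by
          field_simp
  calc (n ! : ℝ) * ((a+1) / Real.exp 1) ^ (a+1)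
      < (n ! : ℝ) * ((a+1/2) * (a / Real.exp 1) ^ a) := by
        exact mul_lt_mul_of_pos_left hstep hfact
    _ = ((n+1)! : ℝ) * (a / Real.exp 1) ^ a := by
        rw [Nat.factorial_succ]
        push_cast
        rw [hadef]
        ring

lemma dd_tendsto : Tendsto dd atTop (𝓝 (Real.sqrt (2*π))) := by
  have h1 : Tendsto (fun n : ℕ => ((1:ℝ) + (1/2)/(n:ℝ))^(n:ℕ)) atTop (𝓝 (Real.exp (1/2))) :=
    Real.tendsto_one_add_div_pow_exp (1/2)
  have h2 : Tendsto (fun n : ℕ => (1:ℝ) + (1/2)/(n:ℝ)) atTop (𝓝 1) := by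
    have h := tendsto_one_div_atTop_nhds_zero_nat.const_mul (1/2 : ℝ)
    simp only [mul_zero] at h
    have h' : Tendsto (fun n : ℕ => (1:ℝ) + (1/2)*(1/(n:ℝ))) atTop (𝓝 (1+0)) :=
      tendsto_const_nhds.add h
    simp only [add_zero] at h'
    refine h'.congr (fun n => ?_)
    ring
  have h3 : Tendsto (fun n : ℕ => Real.sqrt ((1:ℝ) + (1/2)/(n:ℝ))) atTop (𝓝 1) := by
    have := (Real.continuous_sqrt.tendsto 1).comp h2
    simpa [Function.comp_def] using this
  have hepos : (0:ℝ) < Real.exp (1/2) := Real.exp_pos _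
  have h4 : Tendsto (fun n:ℕ => Stirling.stirlingSeq n *
      (Real.sqrt 2 * Real.exp (1/2) / (((1:ℝ) + (1/2)/(n:ℝ))^(n:ℕ) * Real.sqrt ((1:ℝ) + (1/2)/(n:ℝ)))))
      atTop (𝓝 (Real.sqrt π * (Real.sqrt 2 * Real.exp (1/2) / (Real.exp (1/2) * 1)))) :=
    Stirling.tendsto_stirlingSeq_sqrt_pi.mul (tendsto_const_nhds.div (h1.mul h3) (by positivity))
  have hval : Real.sqrt π * (Real.sqrt 2 * Real.exp (1/2) / (Real.exp (1/2) * 1))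
      = Real.sqrt (2*π) := by
    rw [mul_one, mul_div_assoc, div_self (Real.exp_ne_zero _), mul_one,
      Real.sqrt_mul (by norm_num : (0:ℝ) ≤ 2) π, mul_comm]
  rw [hval] at h4
  refine Tendsto.congr' ?_ h4
  filter_upwards [eventually_ge_atTop 1] with n hn
  have hnn : (0:ℝ) < (n:ℝ) := by exact_mod_cast hn
  have he : (0:ℝ) < Real.exp 1 := Real.exp_pos 1
  have hb : (0:ℝ) < (1:ℝ) + (1/2)/(n:ℝ) := by positivity
  have hx : (0:ℝ) < ((n:ℝ) + 1/2) / Real.exp 1 := by positivity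
  -- split the rpow
  have hxa : (((n:ℝ) + 1/2) / Real.exp 1) ^ ((n:ℝ) + 1/2)
      = ((((n:ℝ) + 1/2) / Real.exp 1)) ^ (n:ℕ) * Real.sqrt (((n:ℝ) + 1/2) / Real.exp 1) := by
    rw [Real.rpow_add hx, Real.rpow_natCast, Real.sqrt_eq_rpow]
  have hsplit : ((n:ℝ) + 1/2) / Real.exp 1 = ((n:ℝ)/Real.exp 1) * ((1:ℝ) + (1/2)/(n:ℝ)) := by
    field_simp
  have hpow : (((n:ℝ) + 1/2) / Real.exp 1) ^ (n:ℕ)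
      = ((n:ℝ)/Real.exp 1)^(n:ℕ) * ((1:ℝ) + (1/2)/(n:ℝ))^(n:ℕ) := by
    rw [hsplit, mul_pow]
  have hsqrt : Real.sqrt (((n:ℝ) + 1/2) / Real.exp 1)
      = Real.sqrt ((n:ℝ)) * Real.sqrt ((1:ℝ) + (1/2)/(n:ℝ)) / Real.sqrt (Real.exp 1) := by
    rw [hsplit, Real.sqrt_mul (by positivity), Real.sqrt_div (le_of_lt hnn)]
    ring
  have hexp : Real.exp ((1:ℝ)/2) = Real.sqrt (Real.exp 1) := Real.exp_half 1
  rw [dd, Stirling.stirlingSeq, hxa, hpow, hsqrt, hexp,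
    Real.sqrt_mul (by norm_num : (0:ℝ) ≤ 2) (n:ℝ)]
  have h01 : Real.sqrt (Real.exp 1) ≠ 0 := by positivity
  have h02 : Real.sqrt (n:ℝ) ≠ 0 := by positivity
  have h03 : ((1:ℝ) + (1/2)/(n:ℝ)) ^ (n:ℕ) ≠ 0 := by positivity
  have h04 : Real.sqrt ((1:ℝ)+(1/2)/(n:ℝ)) ≠ 0 := by positivity
  have h05 : ((n:ℝ)/Real.exp 1)^(n:ℕ) ≠ 0 := by positivity
  have h06 : Real.sqrt 2 ≠ 0 := by positivity
  field_simp

theorem burnside_upper (n : ℕ) (hn : 0 < n) :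
    (n ! : ℝ) < Real.sqrt (2 * π) * (((n : ℝ) + 1/2) / Real.exp 1) ^ ((n : ℝ) + 1/2) := by
  have hmono : Monotone dd := monotone_nat_of_le_succ (fun m => (dd_lt_succ m).le)
  have h2 : dd (n+1) ≤ Real.sqrt (2*π) := hmono.ge_of_tendsto dd_tendsto (n+1)
  have h3 : dd n < Real.sqrt (2*π) := lt_of_lt_of_le (dd_lt_succ n) h2
  have hden : (0:ℝ) < (((n:ℝ) + 1/2) / Real.exp 1) ^ ((n:ℝ) + 1/2) :=
    Real.rpow_pos_of_pos (by positivity) _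
  rw [dd, div_lt_iff₀ hden] at h3
  exact h3
end

section
/- For every positive integer n, there exists a unique real number a_n in the open interval (0, 1/2) such that n! = √(2π) · ((n + a_n)/e)^(n + a_n). -/
open Real Nat Filter Topology


lemma lower_bound (n : ℕ) (hn : 0 < n) :
    Real.sqrt (2 * π) * ((n : ℝ) / Real.exp 1) ^ n < (n ! : ℝ) := by
  induction n with
  | zero => omega
  | succ m ih =>
    rcases Nat.eq_zero_or_pos m with hm | hm
    · subst hm
      have : ((0:ℕ)+1)! = 1 := rfl
      rw [this]
      push_cast
      rw [pow_one, mul_one_div, div_lt_one (exp_pos 1)]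
      have h1 : Real.sqrt (2*π) < Real.sqrt (exp 1 ^ 2) := by
        apply Real.sqrt_lt_sqrt (by positivity)
        nlinarith [pi_lt_d2, Real.exp_one_gt_d9]
      rwa [Real.sqrt_sq (exp_pos 1).le] at h1
    · have key : ((m:ℝ)+1) * ((m:ℝ) / Real.exp 1) ^ m > (((m:ℝ)+1) / Real.exp 1) ^ (m+1) := by
      -- (m+1)/e)^{m+1} = ((m+1)/e)^m * (m+1)/e ; need ((m+1)/m)^m < e
        have hm0 : (0:ℝ) < m := by exact_mod_cast hm
        have h2 : (1 + 1/(m:ℝ)) ^ m < Real.exp 1 := by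
          have h3 : (1 + 1/(m:ℝ)) < Real.exp (1/m) := by
            have := Real.add_one_lt_exp (x := 1/(m:ℝ)) (by positivity)
            linarith
          calc (1 + 1/(m:ℝ)) ^ m < Real.exp (1/m) ^ m := by
                apply pow_lt_pow_left₀ h3 (by positivity) (by omega)
            _ = Real.exp 1 := by
                rw [← Real.exp_nat_mul]
                congr 1; field_simp
        have h4 : ((m:ℝ)+1)^(m+1) < Real.exp 1 * (((m:ℝ)+1) * (m:ℝ)^m) := by
          have : ((m:ℝ)+1)^m = (1 + 1/(m:ℝ))^m * (m:ℝ)^m := by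
            rw [← mul_pow]; congr 1; field_simp
          rw [pow_succ]
          calc ((m:ℝ)+1)^m * ((m:ℝ)+1) = (1 + 1/(m:ℝ))^m * (m:ℝ)^m * ((m:ℝ)+1) := by rw [this]
            _ < Real.exp 1 * (m:ℝ)^m * ((m:ℝ)+1) := by
                apply mul_lt_mul_of_pos_right (mul_lt_mul_of_pos_right h2 (by positivity)) (by positivity)
            _ = Real.exp 1 * (((m:ℝ)+1) * (m:ℝ)^m) := by ring
        rw [div_pow, div_pow, gt_iff_lt, div_lt_iff₀ (by positivity)]
        have heq : ((m:ℝ)+1) * ((m:ℝ)^m/Real.exp 1^m) * Real.exp 1^(m+1) = Real.exp 1 * (((m:ℝ)+1) * (m:ℝ)^m) := by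
          rw [pow_succ]; field_simp
        linarith
      have ihm := ih hm
      have hfac : ((m+1)! : ℝ) = ((m:ℝ)+1) * (m ! : ℝ) := by
        rw [factorial_succ]; push_cast; ring
      push_cast
      calc Real.sqrt (2*π) * (((m:ℝ)+1) / Real.exp 1) ^ (m+1)
          < Real.sqrt (2*π) * (((m:ℝ)+1) * ((m:ℝ) / Real.exp 1) ^ m) := by
            apply mul_lt_mul_of_pos_left key (by positivity)
        _ = ((m:ℝ)+1) * (Real.sqrt (2*π) * ((m:ℝ) / Real.exp 1) ^ m) := by ring
        _ < ((m:ℝ)+1) * (m ! : ℝ) := by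
            apply mul_lt_mul_of_pos_left ihm (by positivity)
        _ = ((m+1)! : ℝ) := by rw [hfac]


lemma aux_h_neg {u : ℝ} (hu0 : 0 < u) (hu1 : u < 1) :
    Real.log (1+u) - Real.log (1-u) + u * Real.log (1-u^2) - 2*u < 0 := by
  set h : ℝ → ℝ := fun x => Real.log (1+x) - Real.log (1-x) + x * Real.log (1-x^2) - 2*x with hh
  have key : StrictAntiOn h (Set.Ico (0:ℝ) 1) := by
    apply strictAntiOn_of_deriv_neg (convex_Ico 0 1)
    · apply ContinuousOn.sub
      · apply ContinuousOn.add
        · apply ContinuousOn.sub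
          · exact (continuous_const.add continuous_id).continuousOn.log
              (fun x hx => by show (1:ℝ) + x ≠ 0; rw [Set.mem_Ico] at hx; nlinarith [hx.1, hx.2])
          · exact (continuous_const.sub continuous_id).continuousOn.log
              (fun x hx => by show (1:ℝ) - x ≠ 0; rw [Set.mem_Ico] at hx; nlinarith [hx.1, hx.2])
        · exact continuousOn_id.mul ((continuous_const.sub (continuous_pow 2)).continuousOn.log
              (fun x hx => by show (1:ℝ) - x^2 ≠ 0; rw [Set.mem_Ico] at hx; nlinarith [hx.1, hx.2]))
      · exact (continuous_const.mul continuous_id).continuousOn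
    · intro x hx
      rw [interior_Ico] at hx
      obtain ⟨hx0, hx1⟩ := hx
      have h1x : (0:ℝ) < 1 + x := by linarith
      have h1x' : (0:ℝ) < 1 - x := by linarith
      have h1x2 : (0:ℝ) < 1 - x^2 := by nlinarith
      have d1 : HasDerivAt (fun y : ℝ => Real.log (1+y)) (1/(1+x)) x := by
        simpa using ((hasDerivAt_id x).const_add 1).log h1x.ne'
      have d2 : HasDerivAt (fun y : ℝ => Real.log (1-y)) (-1/(1-x)) x := by
        simpa using ((hasDerivAt_id x).const_sub 1).log h1x'.ne'
      have d3 : HasDerivAt (fun y : ℝ => 1 - y^2) (-(2*x)) x := by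
        have := (hasDerivAt_pow 2 x).const_sub 1
        exact this.congr_deriv (by norm_num)
      have d4 : HasDerivAt (fun y : ℝ => Real.log (1-y^2)) (-(2*x)/(1-x^2)) x :=
        d3.log h1x2.ne'
      have d5 : HasDerivAt (fun y : ℝ => y * Real.log (1-y^2))
          (1 * Real.log (1-x^2) + x * (-(2*x)/(1-x^2))) x := (hasDerivAt_id x).mul d4
      have d7 : HasDerivAt (fun y : ℝ => 2*y) (2*1) x := (hasDerivAt_id x).const_mul 2
      have d6 : HasDerivAt h
          (1/(1+x) - (-1/(1-x)) + (1 * Real.log (1-x^2) + x * (-(2*x)/(1-x^2))) - 2*1) x :=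
        ((d1.sub d2).add d5).sub d7
      rw [d6.deriv]
      have heq : 1/(1+x) - (-1/(1-x)) + (1 * Real.log (1-x^2) + x * (-(2*x)/(1-x^2))) - 2*1
          = Real.log (1-x^2) := by
        field_simp
        ring
      rw [heq]
      exact Real.log_neg (by nlinarith) (by nlinarith)
  have h0 : h 0 = 0 := by simp [hh]
  have := key (Set.left_mem_Ico.mpr one_pos) ⟨hu0.le, hu1⟩ hu0
  rw [h0] at this
  simpa [hh] using this

lemma key2 {x : ℝ} (hx : 1 ≤ x) :
    (x+1/2)*Real.log (x+1/2) - (x-1/2)*Real.log (x-1/2) < 1 + Real.log x := by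
  have hx0 : (0:ℝ) < x := by linarith
  set u := 1/(2*x) with hu
  have hu0 : 0 < u := by rw [hu]; positivity
  have hu1 : u < 1 := by rw [hu, div_lt_one (by linarith)]; linarith
  have hxu : x * u = 1/2 := by rw [hu]; field_simp
  have h1u : (0:ℝ) < 1 + u := by linarith
  have h1u' : (0:ℝ) < 1 - u := by linarith
  have hplus : x + 1/2 = x * (1+u) := by rw [mul_add, mul_one, hxu]
  have hminus : x - 1/2 = x * (1-u) := by rw [mul_sub, mul_one, hxu]
  have hlp : Real.log (x+1/2) = Real.log x + Real.log (1+u) := by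
    rw [hplus, Real.log_mul hx0.ne' h1u.ne']
  have hlm : Real.log (x-1/2) = Real.log x + Real.log (1-u) := by
    rw [hminus, Real.log_mul hx0.ne' h1u'.ne']
  have hsq : Real.log (1-u^2) = Real.log (1+u) + Real.log (1-u) := by
    rw [show (1:ℝ)-u^2 = (1+u)*(1-u) by ring, Real.log_mul h1u.ne' h1u'.ne']
  have hneg := aux_h_neg hu0 hu1
  rw [hsq] at hneg
  have hmul := mul_lt_mul_of_pos_left hneg hx0
  rw [mul_zero] at hmul
  set a := Real.log (1+u)
  set b := Real.log (1-u)
  have e : x*(a - b + u*(a+b) - 2*u) = x*a - x*b + (x*u)*(a+b) - 2*(x*u) := by ring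
  rw [e, hxu] at hmul
  rw [hlp, hlm]
  nlinarith [hmul]

noncomputable def cseq (n : ℕ) : ℝ := (((n:ℝ) + 1/2) / Real.exp 1) ^ ((n:ℝ) + 1/2)

lemma cseq_pos (n : ℕ) : 0 < cseq n := Real.rpow_pos_of_pos (by positivity) _

lemma cseq_exp (n : ℕ) :
    cseq n = Real.exp (((n:ℝ)+1/2) * (Real.log ((n:ℝ)+1/2) - 1)) := by
  rw [cseq, Real.rpow_def_of_pos (by positivity), Real.log_div (by positivity) (Real.exp_ne_zero 1),
    Real.log_exp]
  congr 1; ring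

lemma cseq_step (n : ℕ) : cseq (n+1) < ((n:ℝ)+1) * cseq n := by
  have hx : (1:ℝ) ≤ (n:ℝ)+1 := by
    have := Nat.cast_nonneg (α := ℝ) n; linarith
  have k := key2 hx
  rw [show ((n:ℝ)+1-1/2) = (n:ℝ)+1/2 by ring] at k
  rw [cseq_exp, cseq_exp,
    show ((n:ℝ)+1) = Real.exp (Real.log ((n:ℝ)+1)) from (Real.exp_log (by positivity)).symm,
    ← Real.exp_add]
  apply Real.exp_lt_exp.mpr
  push_cast
  nlinarith [k]

noncomputable def bseq (n : ℕ) : ℝ := (n ! : ℝ) / cseq n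

lemma bseq_succ (n : ℕ) : bseq (n+1) = (((n:ℝ)+1) * (n ! : ℝ)) / cseq (n+1) := by
  rw [bseq, Nat.factorial_succ]; push_cast; ring

lemma bseq_lt_succ (n : ℕ) : bseq n < bseq (n+1) := by
  have hfac : (0:ℝ) < (n ! : ℝ) := by exact_mod_cast n.factorial_pos
  calc bseq n = ((n:ℝ)+1)*(n ! : ℝ)/(((n:ℝ)+1)*cseq n) := by
        rw [bseq, mul_div_mul_left _ _ (by positivity)]
    _ < ((n:ℝ)+1)*(n ! : ℝ)/cseq (n+1) :=
        div_lt_div_of_pos_left (by positivity) (cseq_pos _) (cseq_step n)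
    _ = bseq (n+1) := (bseq_succ n).symm

lemma bseq_mono : StrictMono bseq := strictMono_nat_of_lt_succ bseq_lt_succ

lemma bseq_tendsto : Tendsto bseq atTop (𝓝 (Real.sqrt (2*π))) := by
  have hs := Stirling.tendsto_stirlingSeq_sqrt_pi
  have h1 : Tendsto (fun n : ℕ => ((1 + (1/2 : ℝ)/n)^n)⁻¹) atTop (𝓝 (Real.exp (1/2))⁻¹) :=
    (Real.tendsto_one_add_div_pow_exp (1/2)).inv₀ (Real.exp_pos _).ne'
  have h2 : Tendsto (fun n : ℕ => (n:ℝ)/((n:ℝ)+1/2)) atTop (𝓝 1) := by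
    have hd : Tendsto (fun n : ℕ => ((n:ℝ)+1/2)) atTop atTop :=
      tendsto_atTop_add_const_right _ _ tendsto_natCast_atTop_atTop
    have h0 : Tendsto (fun n : ℕ => (1/2 : ℝ)/((n:ℝ)+1/2)) atTop (𝓝 0) :=
      Tendsto.div_atTop tendsto_const_nhds hd
    have h5 := (tendsto_const_nhds (x := (1:ℝ)) (f := atTop)).sub h0
    rw [sub_zero] at h5
    apply h5.congr
    intro n
    have hne : ((n:ℝ)+1/2) ≠ 0 := by positivity
    field_simp; ring
  have h3 : Tendsto (fun n : ℕ => Real.sqrt ((n:ℝ)/((n:ℝ)+1/2))) atTop (𝓝 1) := by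
    have h4 := (Real.continuous_sqrt.tendsto 1).comp h2
    rw [Real.sqrt_one] at h4
    exact h4
  have hprod : Tendsto (fun n : ℕ => Stirling.stirlingSeq n *
      (Real.sqrt 2 * Real.sqrt ((n:ℝ)/((n:ℝ)+1/2)) * Real.exp (1/2) * ((1 + (1/2:ℝ)/n)^n)⁻¹))
      atTop (𝓝 (Real.sqrt π * (Real.sqrt 2 * 1 * Real.exp (1/2) * (Real.exp (1/2))⁻¹))) :=
    hs.mul (((tendsto_const_nhds.mul h3).mul tendsto_const_nhds).mul h1)
  have hval : Real.sqrt π * (Real.sqrt 2 * 1 * Real.exp (1/2) * (Real.exp (1/2))⁻¹)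
      = Real.sqrt (2*π) := by
    rw [Real.sqrt_mul two_pos.le π, mul_one, mul_assoc, mul_inv_cancel₀ (Real.exp_pos _).ne',
      mul_one]
    ring
  rw [hval] at hprod
  apply hprod.congr'
  filter_upwards [Filter.eventually_ge_atTop 1] with n hn
  have hN : (1:ℝ) ≤ (n:ℝ) := by exact_mod_cast hn
  have hN0 : (0:ℝ) < (n:ℝ) := by linarith
  have hM : (0:ℝ) < (n:ℝ)+1/2 := by linarith
  have hE := Real.exp_pos 1
  have hfac : (0:ℝ) < (n ! : ℝ) := by exact_mod_cast n.factorial_pos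
  have e1 : (1 + (1/2:ℝ)/(n:ℝ)) = ((n:ℝ)+1/2)/(n:ℝ) := by field_simp
  have ehalf : Real.exp (1/2 : ℝ) = Real.sqrt (Real.exp 1) := Real.exp_half 1
  rw [Stirling.stirlingSeq, bseq, cseq, Real.rpow_add (by positivity), Real.rpow_natCast,
    ← Real.sqrt_eq_rpow, e1, ehalf,
    Real.sqrt_mul (by norm_num : (0:ℝ) ≤ 2) (n:ℝ),
    Real.sqrt_div hM.le (Real.exp 1),
    Real.sqrt_div hN0.le ((n:ℝ)+1/2),
    div_pow, div_pow, div_pow]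
  have s2 : (0:ℝ) < Real.sqrt 2 := Real.sqrt_pos.mpr two_pos
  have sN : (0:ℝ) < Real.sqrt (n:ℝ) := Real.sqrt_pos.mpr hN0
  have sM : (0:ℝ) < Real.sqrt ((n:ℝ)+1/2) := Real.sqrt_pos.mpr hM
  have sE : (0:ℝ) < Real.sqrt (Real.exp 1) := Real.sqrt_pos.mpr hE
  have pN : (0:ℝ) < (n:ℝ)^n := by positivity
  have pM : (0:ℝ) < ((n:ℝ)+1/2)^n := by positivity
  have pE : (0:ℝ) < (Real.exp 1)^n := by positivity
  field_simp


lemma upper_bound (n : ℕ) : (n ! : ℝ) < Real.sqrt (2*π) * cseq n := by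
  have h1 : bseq n < bseq (n+1) := bseq_lt_succ n
  have h2 : bseq (n+1) ≤ Real.sqrt (2*π) := by
    apply ge_of_tendsto bseq_tendsto
    filter_upwards [Filter.eventually_ge_atTop (n+1)] with m hm
    exact bseq_mono.monotone hm
  have h3 := lt_of_lt_of_le h1 h2
  rw [bseq, div_lt_iff₀ (cseq_pos n)] at h3
  linarith [h3]

theorem exists_unique_a (n : ℕ) (hn : 0 < n) :
    ∃! a : ℝ, a ∈ Set.Ioo (0 : ℝ) (1/2) ∧
      (n ! : ℝ) = Real.sqrt (2 * π) * (((n : ℝ) + a) / Real.exp 1) ^ ((n : ℝ) + a) := by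
  have hn1 : (1:ℝ) ≤ (n:ℝ) := by exact_mod_cast hn
  set g : ℝ → ℝ := fun a => Real.sqrt (2*π) * Real.exp (((n:ℝ)+a) * (Real.log ((n:ℝ)+a) - 1))
    with hg
  have hpos : ∀ a : ℝ, 0 ≤ a → (0:ℝ) < (n:ℝ) + a := fun a ha => by linarith
  have Feq : ∀ a : ℝ, 0 ≤ a →
      Real.sqrt (2*π) * (((n:ℝ)+a) / Real.exp 1) ^ ((n:ℝ)+a) = g a := by
    intro a ha
    rw [hg]
    congr 1
    rw [Real.rpow_def_of_pos (by positivity : (0:ℝ) < ((n:ℝ)+a)/Real.exp 1),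
      Real.log_div (hpos a ha).ne' (Real.exp_ne_zero 1), Real.log_exp]
    congr 1; ring
  have gcont : ContinuousOn g (Set.Icc 0 (1/2)) := by
    apply ContinuousOn.mul continuousOn_const
    apply Real.continuous_exp.comp_continuousOn
    apply ContinuousOn.mul
    · exact (continuous_const.add continuous_id).continuousOn
    · apply ContinuousOn.sub _ continuousOn_const
      apply (continuous_const.add continuous_id).continuousOn.log
      intro a ha
      exact (hpos a ha.1).ne'
  have gmono : StrictMonoOn g (Set.Icc 0 (1/2)) := by
    apply strictMonoOn_of_deriv_pos (convex_Icc _ _) gcont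
    intro a ha
    rw [interior_Icc] at ha
    obtain ⟨ha0, ha1⟩ := ha
    have hna : (0:ℝ) < (n:ℝ) + a := hpos a ha0.le
    have d1 : HasDerivAt (fun y : ℝ => (n:ℝ) + y) 1 a := (hasDerivAt_id a).const_add _
    have d2 : HasDerivAt (fun y : ℝ => Real.log ((n:ℝ)+y) - 1) (1/((n:ℝ)+a) - 0) a :=
      (d1.log hna.ne').sub (hasDerivAt_const a 1)
    have d3 : HasDerivAt (fun y : ℝ => ((n:ℝ)+y) * (Real.log ((n:ℝ)+y) - 1))
        (1 * (Real.log ((n:ℝ)+a) - 1) + ((n:ℝ)+a) * (1/((n:ℝ)+a) - 0)) a := d1.mul d2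
    have d4 : HasDerivAt g (Real.sqrt (2*π) *
        (Real.exp (((n:ℝ)+a) * (Real.log ((n:ℝ)+a) - 1)) *
          (1 * (Real.log ((n:ℝ)+a) - 1) + ((n:ℝ)+a) * (1/((n:ℝ)+a) - 0)))) a :=
      (d3.exp).const_mul _
    rw [d4.deriv]
    have e5 : 1 * (Real.log ((n:ℝ)+a) - 1) + ((n:ℝ)+a) * (1/((n:ℝ)+a) - 0)
        = Real.log ((n:ℝ)+a) := by field_simp; ring
    rw [e5]
    have hlog : 0 < Real.log ((n:ℝ)+a) := Real.log_pos (by linarith)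
    have hsq : (0:ℝ) < Real.sqrt (2*π) := Real.sqrt_pos.mpr (by positivity)
    positivity
  have h0 : g 0 < (n ! : ℝ) := by
    have e6 : g 0 = Real.sqrt (2*π) * ((n:ℝ)/Real.exp 1) ^ n := by
      rw [hg]
      simp only [add_zero]
      congr 1
      rw [show (n:ℝ) * (Real.log (n:ℝ) - 1) = (n:ℕ) * (Real.log (n:ℝ) - 1) by norm_num,
        Real.exp_nat_mul, Real.exp_sub, Real.exp_log (by positivity : (0:ℝ) < (n:ℝ))]
    rw [e6]
    exact lower_bound n hn
  have h2 : (n ! : ℝ) < g (1/2) := by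
    have e7 : g (1/2) = Real.sqrt (2*π) * cseq n := by rw [hg, cseq_exp]
    rw [e7]
    exact upper_bound n
  obtain ⟨a, haI, hga⟩ := intermediate_value_Ioo (by norm_num : (0:ℝ) ≤ 1/2) gcont ⟨h0, h2⟩
  have haIcc : a ∈ Set.Icc (0:ℝ) (1/2) := Set.Ioo_subset_Icc_self haI
  refine ⟨a, ⟨haI, ?_⟩, ?_⟩
  · rw [Feq a haIcc.1, hga]
  · rintro y ⟨hyI, hy⟩
    have hyIcc : y ∈ Set.Icc (0:ℝ) (1/2) := Set.Ioo_subset_Icc_self hyI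
    apply gmono.injOn hyIcc haIcc
    rw [← Feq y hyIcc.1, ← hy, hga]
end

section
/- Let a_n ∈ (0, 1/2) be defined by n! = √(2π) · ((n + a_n)/e)^(n + a_n) for each positive integer n. Then the sequence (a_n) is strictly increasing. -/
open Real Nat

private lemma hasDerivAt_g {t : ℝ} (ht : 0 < t) :
    HasDerivAt (fun x : ℝ => x * Real.log x - x) (Real.log t) t := by
  have h := ((hasDerivAt_id t).mul (Real.hasDerivAt_log ht.ne')).sub (hasDerivAt_id t)
  convert h using 1
  · rfl
  · rfl
  · rfl
  simp [ht.ne']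

private lemma g_sm : StrictMonoOn (fun t : ℝ => t * Real.log t - t) (Set.Ici 1) := by
  apply strictMonoOn_of_deriv_pos (convex_Ici 1)
  · exact (continuousOn_id.mul (continuousOn_id.log (fun x hx => by
      simp only [Set.mem_Ici] at hx; intro h; simp [id] at h; linarith))).sub continuousOn_id
  · intro x hx
    rw [interior_Ici] at hx
    rw [(hasDerivAt_g (by linarith [Set.mem_Ioi.mp hx] : (0:ℝ) < x)).deriv]
    exact Real.log_pos hx

private lemma d_sm : StrictMonoOn
    (fun t : ℝ => ((t+1) * Real.log (t+1) - (t+1)) - (t * Real.log t - t)) (Set.Ici 1) := by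
  apply strictMonoOn_of_deriv_pos (convex_Ici 1)
  · apply ContinuousOn.sub
    · apply ContinuousOn.sub
      · exact (continuousOn_id.add continuousOn_const).mul
          ((continuousOn_id.add continuousOn_const).log (fun x hx => by
            simp only [Set.mem_Ici] at hx; show x + 1 ≠ 0; intro h; linarith))
      · exact continuousOn_id.add continuousOn_const
    · exact (continuousOn_id.mul (continuousOn_id.log (fun x hx => by
        simp only [Set.mem_Ici] at hx; intro h; simp [id] at h; linarith))).sub continuousOn_id
  · intro x hx
    rw [interior_Ici] at hx
    have hx1 : (1:ℝ) < x := hx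
    have h1 : HasDerivAt (fun t : ℝ => (t+1) * Real.log (t+1) - (t+1)) (Real.log (x+1)) x := by
      have := (hasDerivAt_g (by linarith : (0:ℝ) < x+1)).comp x ((hasDerivAt_id x).add_const 1)
      rw [mul_one] at this
      exact this
    have h2 := h1.sub (hasDerivAt_g (by linarith : (0:ℝ) < x))
    rw [show deriv (fun t : ℝ => (t+1) * Real.log (t+1) - (t+1) - (t * Real.log t - t)) x =
      Real.log (x+1) - Real.log x from h2.deriv]
    have := Real.log_lt_log (by linarith : (0:ℝ) < x) (by linarith : x < x+1)
    linarith

private lemma hasDerivAt_psi {x : ℝ} (h1 : -1 < x) (h2 : x < 1) :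
    HasDerivAt (fun x : ℝ => 2*x - (1+x)*Real.log (1+x) + (1-x)*Real.log (1-x))
      (-(Real.log (1+x) + Real.log (1-x))) x := by
  have hp : (0:ℝ) < 1 + x := by linarith
  have hm : (0:ℝ) < 1 - x := by linarith
  have hA : HasDerivAt (fun x : ℝ => 1 + x) 1 x := by
    simpa using (hasDerivAt_id x).const_add 1
  have hB : HasDerivAt (fun x : ℝ => 1 - x) (-1) x := by
    simpa using (hasDerivAt_id x).const_sub (1:ℝ)
  have hA' : HasDerivAt (fun x : ℝ => (1+x)*Real.log (1+x))
      (1 * Real.log (1+x) + (1+x) * (1/(1+x))) x := by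
    have hlog : HasDerivAt (fun x : ℝ => Real.log (1+x)) (1/(1+x)) x := by
      simpa using hA.log hp.ne'
    exact hA.mul hlog
  have hB' : HasDerivAt (fun x : ℝ => (1-x)*Real.log (1-x))
      ((-1) * Real.log (1-x) + (1-x) * ((-1)/(1-x))) x := by
    have hlog : HasDerivAt (fun x : ℝ => Real.log (1-x)) ((-1)/(1-x)) x := by
      simpa using hB.log hm.ne'
    exact hB.mul hlog
  have h := (((hasDerivAt_id x).const_mul 2).sub hA').add hB'
  convert h using 1
  · rfl
  · rfl
  · rfl
  field_simp
  ring

private lemma psi_le {s : ℝ} (hs0 : 0 ≤ s) (hs1 : s < 1) :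
    (1+s)*Real.log (1+s) - (1-s)*Real.log (1-s) ≤ 2*s := by
  set ψ : ℝ → ℝ := fun x => 2*x - (1+x)*Real.log (1+x) + (1-x)*Real.log (1-x) with hψ
  have hmono : MonotoneOn ψ (Set.Icc 0 s) := by
    apply monotoneOn_of_deriv_nonneg (convex_Icc 0 s)
    · apply ContinuousOn.add
      · apply ContinuousOn.sub
        · exact (continuous_const.mul continuous_id).continuousOn
        · exact (continuousOn_const.add continuousOn_id).mul
            ((continuousOn_const.add continuousOn_id).log (fun x hx => by
              simp only [Set.mem_Icc] at hx; show 1 + x ≠ 0; intro h; linarith [hx.1]))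
      · exact (continuousOn_const.sub continuousOn_id).mul
          ((continuousOn_const.sub continuousOn_id).log (fun x hx => by
            simp only [Set.mem_Icc] at hx; show 1 - x ≠ 0; intro h
            have : x ≤ s := hx.2; linarith))
    · intro x hx
      rw [interior_Icc] at hx
      exact (hasDerivAt_psi (by linarith [hx.1]) (by linarith [hx.2])).differentiableAt.differentiableWithinAt
    · intro x hx
      rw [interior_Icc] at hx
      rw [(hasDerivAt_psi (by linarith [hx.1]) (by linarith [hx.2])).deriv]
      have hp : (0:ℝ) < 1 + x := by linarith [hx.1]
      have hm : (0:ℝ) < 1 - x := by linarith [hx.2]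
      have : Real.log (1+x) + Real.log (1-x) = Real.log ((1+x)*(1-x)) :=
        (Real.log_mul hp.ne' hm.ne').symm
      rw [this]
      have hle : (1+x)*(1-x) ≤ 1 := by nlinarith [hx.1]
      have := Real.log_nonpos (by nlinarith) hle
      linarith
  have h0 : ψ 0 ≤ ψ s := hmono (Set.mem_Icc.mpr ⟨le_refl 0, hs0⟩)
    (Set.mem_Icc.mpr ⟨hs0, le_refl s⟩) hs0
  have : ψ 0 = 0 := by simp [hψ]
  rw [this] at h0
  simp only [hψ] at h0
  linarith

private lemma endpoint {u : ℝ} (hu : 2 ≤ u) :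
    ((u+1/2) * Real.log (u+1/2) - (u+1/2)) - ((u-1/2) * Real.log (u-1/2) - (u-1/2))
      ≤ Real.log u := by
  have hu0 : (0:ℝ) < u := by linarith
  set s : ℝ := 1/(2*u) with hs
  have hs0 : 0 < s := by positivity
  have hs1 : s < 1 := by rw [hs, div_lt_one (by linarith)]; linarith
  have e1 : u + 1/2 = u * (1+s) := by rw [hs]; field_simp
  have e2 : u - 1/2 = u * (1-s) := by rw [hs]; field_simp
  have l1 : Real.log (u+1/2) = Real.log u + Real.log (1+s) := by
    rw [e1, Real.log_mul hu0.ne' (by linarith : (1:ℝ)+s ≠ 0)]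
  have l2 : Real.log (u-1/2) = Real.log u + Real.log (1-s) := by
    rw [e2, Real.log_mul hu0.ne' (by linarith : (1:ℝ)-s ≠ 0)]
  have hψ := psi_le hs0.le hs1
  have hmul : u * ((1+s)*Real.log (1+s) - (1-s)*Real.log (1-s)) ≤ u * (2*s) :=
    mul_le_mul_of_nonneg_left hψ hu0.le
  have h2s : u * (2*s) = 1 := by rw [hs]; field_simp
  have h3 : u*(2*s)*Real.log u = Real.log u := by rw [h2s, one_mul]
  have expand : u*(1+s)*(Real.log u + Real.log (1+s)) - u*(1+s) -
      (u*(1-s)*(Real.log u + Real.log (1-s)) - u*(1-s)) =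
      u*(2*s)*Real.log u + u*((1+s)*Real.log (1+s) - (1-s)*Real.log (1-s)) - u*(2*s) := by
    ring
  rw [l1, l2, e1, e2]
  linarith [expand, hmul, h3, h2s]

theorem a_strictMono (a : ℕ → ℝ)
    (ha : ∀ n : ℕ, 0 < n → a n ∈ Set.Ioo (0 : ℝ) (1/2) ∧
      (n ! : ℝ) = Real.sqrt (2 * π) * (((n : ℝ) + a n) / Real.exp 1) ^ ((n : ℝ) + a n)) :
    ∀ m k : ℕ, 0 < m → m < k → a m < a k := by
  have hlog : ∀ n : ℕ, 0 < n → Real.log (n ! : ℝ) =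
      Real.log (Real.sqrt (2*π)) +
        (((n:ℝ) + a n) * Real.log ((n:ℝ)+a n) - ((n:ℝ)+a n)) := by
    intro n hn
    obtain ⟨⟨ha0, _⟩, heq⟩ := ha n hn
    have hn1 : (1:ℝ) ≤ (n:ℝ) := by exact_mod_cast hn
    have hna : (0:ℝ) < (n:ℝ) + a n := by linarith
    have hx : (0:ℝ) < ((n:ℝ)+a n)/Real.exp 1 := div_pos hna (Real.exp_pos 1)
    have hsq : (0:ℝ) < Real.sqrt (2*π) := Real.sqrt_pos.mpr (by positivity)
    rw [heq, Real.log_mul hsq.ne' (Real.rpow_pos_of_pos hx _).ne',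
      Real.log_rpow hx, Real.log_div hna.ne' (Real.exp_pos 1).ne', Real.log_exp]
    ring
  have step : ∀ n : ℕ, 0 < n → a n < a (n+1) := by
    intro n hn
    obtain ⟨⟨ha0, ha2⟩, _⟩ := ha n hn
    obtain ⟨⟨hb0, hb2⟩, _⟩ := ha (n+1) (Nat.succ_pos n)
    have hn1 : (1:ℝ) ≤ (n:ℝ) := by exact_mod_cast hn
    have e1 := hlog n hn
    have e2 := hlog (n+1) (Nat.succ_pos n)
    push_cast at e2
    have hfp : (0:ℝ) < (n ! : ℝ) := by exact_mod_cast n.factorial_pos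
    have hfact : Real.log ((n+1)! : ℝ) = Real.log ((n:ℝ)+1) + Real.log (n ! : ℝ) := by
      have hc : ((n+1)! : ℝ) = ((n:ℝ)+1) * (n ! : ℝ) := by
        push_cast [Nat.factorial_succ]; ring
      rw [hc, Real.log_mul (by positivity) hfp.ne']
    have key : (((n:ℝ)+1+a (n+1)) * Real.log ((n:ℝ)+1+a (n+1)) - ((n:ℝ)+1+a (n+1))) -
        (((n:ℝ)+a n) * Real.log ((n:ℝ)+a n) - ((n:ℝ)+a n)) = Real.log ((n:ℝ)+1) := by
      have e2' : Real.log (((n+1)! : ℕ) : ℝ) =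
          Real.log (Real.sqrt (2*π)) +
            (((n:ℝ)+1+a (n+1)) * Real.log ((n:ℝ)+1+a (n+1)) - ((n:ℝ)+1+a (n+1))) := by
        convert e2 using 3
      linarith [e1, e2', hfact]
    by_contra hcon
    push_neg at hcon
    have h1 : ((n:ℝ)+1+a (n+1)) * Real.log ((n:ℝ)+1+a (n+1)) - ((n:ℝ)+1+a (n+1)) ≤
        ((n:ℝ)+1+a n) * Real.log ((n:ℝ)+1+a n) - ((n:ℝ)+1+a n) :=
      g_sm.monotoneOn (Set.mem_Ici.mpr (by linarith)) (Set.mem_Ici.mpr (by linarith))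
        (by linarith)
    have h2 := d_sm (Set.mem_Ici.mpr (by linarith : (1:ℝ) ≤ (n:ℝ) + a n))
      (Set.mem_Ici.mpr (by linarith : (1:ℝ) ≤ (n:ℝ) + 1/2)) (by linarith)
    simp only at h2
    have ea : (n:ℝ) + a n + 1 = (n:ℝ) + 1 + a n := by ring
    rw [ea] at h2
    have hend := endpoint (by linarith : (2:ℝ) ≤ (n:ℝ)+1)
    have ec : (n:ℝ) + 1 + 1/2 = (n:ℝ) + 1/2 + 1 := by ring
    have ed : (n:ℝ) + 1 - 1/2 = (n:ℝ) + 1/2 := by ring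
    rw [ec, ed] at hend
    linarith [key, h1, h2, hend]
  intro m k hm
  induction k with
  | zero => intro h; omega
  | succ k ih =>
    intro hmk
    rcases Nat.lt_succ_iff_lt_or_eq.mp hmk with h | h
    · exact (ih h).trans (step k (by omega))
    · exact h ▸ step m hm
end

section
/- Let a_n ∈ (0, 1/2) satisfy n! = √(2π) · ((n + a_n)/e)^(n + a_n). Then lim_{n→∞} a_n = 1/2. -/
open Real Nat Filter

theorem a_tendsto_half (a : ℕ → ℝ)
    (ha : ∀ n : ℕ, 0 < n → a n ∈ Set.Ioo (0 : ℝ) (1/2) ∧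
      (n ! : ℝ) = Real.sqrt (2 * π) * (((n : ℝ) + a n) / Real.exp 1) ^ ((n : ℝ) + a n)) :
    Tendsto a atTop (nhds (1/2)) := by
  have hπ : (0:ℝ) < π := Real.pi_pos
  have hsqrtπ : Real.sqrt π ≠ 0 := by positivity
  have hlogst : Tendsto (fun n => Real.log (Stirling.stirlingSeq n)) atTop
      (nhds (Real.log (Real.sqrt π))) := Stirling.tendsto_stirlingSeq_sqrt_pi.log hsqrtπ
  -- g n := log n! - ((n+1/2) log n - n) tends to log √(2π)
  have hg : Tendsto (fun n : ℕ => Real.log (n ! : ℝ) - (((n:ℝ) + 1/2) * Real.log n - n))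
      atTop (nhds (Real.log (Real.sqrt (2*π)))) := by
    have h2 : Real.log (Real.sqrt (2*π)) = Real.log (Real.sqrt π) + (1/2) * Real.log 2 := by
      rw [Real.log_sqrt (by positivity), Real.log_sqrt hπ.le,
        Real.log_mul (by norm_num) hπ.ne']
      ring
    rw [h2]
    apply Tendsto.congr' _ (hlogst.add_const ((1/2) * Real.log 2))
    filter_upwards [eventually_ge_atTop 1] with n hn
    have hn0 : (0:ℝ) < n := by exact_mod_cast hn
    rw [Stirling.log_stirlingSeq_formula, Real.log_div hn0.ne' (Real.exp_ne_zero 1),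
      Real.log_exp, Real.log_mul (by norm_num) hn0.ne']
    ring
  -- E n → 0 where E n comes from the defining equation
  have hE : Tendsto (fun n : ℕ => ((n:ℝ) + a n) * (Real.log ((n:ℝ) + a n) - 1)
      - (((n:ℝ) + 1/2) * Real.log n - (n:ℝ))) atTop (nhds 0) := by
    have h0 := hg.sub_const (Real.log (Real.sqrt (2*π)))
    rw [sub_self] at h0
    apply Tendsto.congr' _ h0
    filter_upwards [eventually_gt_atTop 0] with n hn
    obtain ⟨⟨hb0, hb2⟩, heq⟩ := ha n hn
    have hn0 : (0:ℝ) < n := by exact_mod_cast hn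
    have hx : (0:ℝ) < (n:ℝ) + a n := by linarith
    have hxe : (0:ℝ) < ((n:ℝ) + a n) / Real.exp 1 := by positivity
    rw [heq, Real.log_mul (by positivity) (Real.rpow_pos_of_pos hxe _).ne',
      Real.log_rpow hxe, Real.log_div hx.ne' (Real.exp_ne_zero 1), Real.log_exp]
    ring
  -- R n → 0
  have hR : Tendsto (fun n : ℕ => ((n:ℝ) + a n) * Real.log (1 + a n / n) - a n)
      atTop (nhds 0) := by
    apply squeeze_zero' (g := fun n : ℕ => 1 / (n:ℝ)) ?_ ?_ tendsto_one_div_atTop_nhds_zero_nat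
    · filter_upwards [eventually_gt_atTop 0] with n hn
      obtain ⟨⟨hb0, hb2⟩, -⟩ := ha n hn
      have hn0 : (0:ℝ) < n := by exact_mod_cast hn
      have hx : (0:ℝ) < 1 + a n / n := by positivity
      have hlb := Real.one_sub_inv_le_log_of_pos hx
      have h1 : (1:ℝ) - (1 + a n / n)⁻¹ = a n / ((n:ℝ) + a n) := by
        rw [inv_eq_one_div]
        field_simp
        ring
      have hx2 : (0:ℝ) < (n:ℝ) + a n := by linarith
      rw [h1] at hlb
      have := mul_le_mul_of_nonneg_left hlb hx2.le
      rw [mul_div_cancel₀ _ hx2.ne'] at this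
      linarith
    · filter_upwards [eventually_gt_atTop 0] with n hn
      obtain ⟨⟨hb0, hb2⟩, -⟩ := ha n hn
      have hn0 : (0:ℝ) < n := by exact_mod_cast hn
      have hn1 : (1:ℝ) ≤ n := by exact_mod_cast hn
      have hx : (0:ℝ) < 1 + a n / n := by positivity
      have hub : Real.log (1 + a n / n) ≤ a n / n := by
        have := Real.log_le_sub_one_of_pos hx
        linarith
      have hx2 : (0:ℝ) < (n:ℝ) + a n := by linarith
      have h2 : ((n:ℝ) + a n) * (a n / n) = a n + a n * a n / n := by
        field_simp
      have h3 := mul_le_mul_of_nonneg_left hub hx2.le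
      have h4 : a n * a n / n ≤ 1 / n := by
        have : a n * a n ≤ 1 := by nlinarith
        rw [div_le_div_iff₀ hn0 hn0]
        nlinarith
      linarith [h3.trans_eq h2]
  -- key : (a n - 1/2) * log n → 0
  have hkey : Tendsto (fun n : ℕ => (a n - 1/2) * Real.log n) atTop (nhds 0) := by
    have h0 := hE.sub hR
    rw [sub_zero] at h0
    apply Tendsto.congr' _ h0
    filter_upwards [eventually_gt_atTop 0] with n hn
    obtain ⟨⟨hb0, hb2⟩, -⟩ := ha n hn
    have hn0 : (0:ℝ) < n := by exact_mod_cast hn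
    have hlog : Real.log ((n:ℝ) + a n) = Real.log n + Real.log (1 + a n / n) := by
      rw [← Real.log_mul hn0.ne' (by positivity)]
      congr 1
      field_simp
    rw [hlog]
    ring
  have hinv : Tendsto (fun n : ℕ => (Real.log n)⁻¹) atTop (nhds 0) :=
    (Real.tendsto_log_atTop.comp tendsto_natCast_atTop_atTop).inv_tendsto_atTop
  have hfin : Tendsto (fun n : ℕ => a n - 1/2) atTop (nhds 0) := by
    have h0 := hkey.mul hinv
    rw [zero_mul] at h0
    apply Tendsto.congr' _ h0
    filter_upwards [eventually_ge_atTop 2] with n hn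
    have h1 : (1:ℝ) < n := by exact_mod_cast lt_of_lt_of_le one_lt_two hn
    have hlogn : Real.log n ≠ 0 := (Real.log_pos h1).ne'
    field_simp
  have := hfin.add_const (1/2)
  simpa using this
end

section
/- For every positive integer n, √(2π) · ((n + c)/e)^(n + c) < n!, where c is any real number with 0 ≤ c ≤ 0.428844. -/
open Real Nat

lemma log_lt_of_taylor {x y : ℝ} (hx : 0 < x) (hy : 0 ≤ y) (N : ℕ)
    (h : x < ∑ i ∈ Finset.range N, y ^ i / i !) : Real.log x < y :=
  (Real.log_lt_iff_lt_exp hx).2 (h.trans_le (Real.sum_le_exp_of_nonneg hy N))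

lemma log_2pi_lt : Real.log (2 * π) < 1.8378770665 := by
  apply log_lt_of_taylor (by positivity) (by norm_num) 21
  have h := Real.pi_lt_d20
  have h2 : (2:ℝ) * π < 6.28318530717958647694 := by linarith
  refine h2.trans_le ?_
  norm_num [Finset.sum_range_succ, Nat.factorial]

lemma log_x1_lt : Real.log 1.428844 < 0.35686573 := by
  apply log_lt_of_taylor (by norm_num) (by norm_num) 13
  norm_num [Finset.sum_range_succ, Nat.factorial]

lemma log_x2_lt : Real.log 2.428844 < 0.88742 := by
  apply log_lt_of_taylor (by norm_num) (by norm_num) 15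
  norm_num [Finset.sum_range_succ, Nat.factorial]

lemma mul_log_mono {s t : ℝ} (hs : 1 ≤ s) (hst : s ≤ t) :
    (Real.log s - 1) * s ≤ (Real.log t - 1) * t := by
  have hs0 : (0:ℝ) < s := lt_of_lt_of_le one_pos hs
  have ht0 : (0:ℝ) < t := hs0.trans_le hst
  have h1 : Real.log (s / t) ≤ s / t - 1 := Real.log_le_sub_one_of_pos (by positivity)
  have h2 : Real.log (s / t) = Real.log s - Real.log t := Real.log_div (ne_of_gt hs0) (ne_of_gt ht0)
  have h3 : 0 ≤ Real.log s := Real.log_nonneg hs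
  have h4 : t * (s / t - 1) = s - t := by field_simp
  have key : t * Real.log s - t * Real.log t ≤ s - t := by
    rw [h2] at h1
    nlinarith [mul_le_mul_of_nonneg_left h1 ht0.le]
  have h5 : s * Real.log s ≤ t * Real.log s := mul_le_mul_of_nonneg_right hst h3
  nlinarith [key, h5]

lemma stirling_lb (m : ℕ) :
    Real.sqrt π * (Real.sqrt (2 * (m + 1 : ℕ)) * (((m + 1 : ℕ) : ℝ) / Real.exp 1) ^ (m + 1)) ≤ ((m + 1)! : ℝ) := by
  have ht : Filter.Tendsto (Stirling.stirlingSeq ∘ Nat.succ) Filter.atTop (nhds (Real.sqrt π)) :=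
    Stirling.tendsto_stirlingSeq_sqrt_pi.comp (Filter.tendsto_add_atTop_nat 1)
  have h1 : Real.sqrt π ≤ Stirling.stirlingSeq (m + 1) :=
    Stirling.stirlingSeq'_antitone.le_of_tendsto ht m
  have hd : (0:ℝ) < Real.sqrt (2 * (m + 1 : ℕ)) * (((m + 1 : ℕ) : ℝ) / Real.exp 1) ^ (m + 1) := by
    positivity
  rw [Stirling.stirlingSeq, le_div_iff₀ hd] at h1
  exact h1

lemma stirling_exp (m : ℕ) :
    Real.sqrt (2 * π) * Real.exp ((Real.log ((m + 1 : ℕ) : ℝ) - 1) * ((m + 1 : ℕ) : ℝ)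
      + Real.log ((m + 1 : ℕ) : ℝ) / 2) ≤ ((m + 1)! : ℝ) := by
  set N : ℝ := ((m + 1 : ℕ) : ℝ) with hN
  have hN0 : (0:ℝ) < N := by positivity
  have e1 : Real.exp ((Real.log N - 1) * N) = (N / Real.exp 1) ^ (m + 1) := by
    rw [mul_comm, hN, Real.exp_nat_mul, Real.exp_sub, Real.exp_log (by positivity : (0:ℝ) < ((m+1:ℕ):ℝ))]
  have e2 : Real.exp (Real.log N / 2) = Real.sqrt N := by
    rw [Real.exp_half, Real.exp_log hN0]
  have e3 : Real.sqrt (2 * π) * Real.sqrt N = Real.sqrt π * Real.sqrt (2 * N) := by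
    rw [← Real.sqrt_mul (by positivity : (0:ℝ) ≤ 2 * π),
        ← Real.sqrt_mul (by positivity : (0:ℝ) ≤ π)]
    ring_nf
  have := stirling_lb m
  rw [Real.exp_add, e1, e2]
  calc Real.sqrt (2 * π) * ((N / Real.exp 1) ^ (m + 1) * Real.sqrt N)
      = (Real.sqrt (2 * π) * Real.sqrt N) * (N / Real.exp 1) ^ (m + 1) := by ring
    _ = Real.sqrt π * (Real.sqrt (2 * N) * (N / Real.exp 1) ^ (m + 1)) := by rw [e3]; ring
    _ ≤ ((m + 1)! : ℝ) := by
        convert this using 4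

theorem lower_bound_c (n : ℕ) (hn : 0 < n) (c : ℝ) (hc0 : 0 ≤ c) (hc1 : c ≤ 0.428844) :
    Real.sqrt (2 * π) * (((n : ℝ) + c) / Real.exp 1) ^ ((n : ℝ) + c) < (n ! : ℝ) := by
  have hn1 : (1:ℝ) ≤ (n : ℝ) := by exact_mod_cast hn
  set N : ℝ := (n : ℝ) with hNdef
  have hNc : (0:ℝ) < N + c := by linarith
  have hrw : ((N + c) / Real.exp 1) ^ (N + c) = Real.exp ((Real.log (N + c) - 1) * (N + c)) := by
    rw [Real.rpow_def_of_pos (by positivity),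
        Real.log_div (ne_of_gt hNc) (Real.exp_ne_zero 1), Real.log_exp]
  rw [hrw]
  have hsq : (0:ℝ) < Real.sqrt (2 * π) := by positivity
  have hmono : (Real.log (N + c) - 1) * (N + c) ≤ (Real.log (N + 0.428844) - 1) * (N + 0.428844) :=
    mul_log_mono (by linarith) (by linarith)
  have key : Real.sqrt (2 * π) * Real.exp ((Real.log (N + 0.428844) - 1) * (N + 0.428844)) < (n ! : ℝ) := by
    rcases Nat.lt_or_ge n 3 with h3 | h3
    · interval_cases n
      · -- n = 1
        have : N + 0.428844 = 1.428844 := by norm_num [hNdef]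
        rw [this]
        have hlx := log_x1_lt
        have hL := log_2pi_lt
        have hexp : (Real.log 1.428844 - 1) * 1.428844 ≤ (0.35686573 - 1) * 1.428844 := by nlinarith
        have h2 : Real.sqrt (2 * π) = Real.exp (Real.log (2 * π) / 2) := by
          rw [Real.exp_half, Real.exp_log (by positivity)]
        rw [h2, ← Real.exp_add]
        calc Real.exp (Real.log (2 * π) / 2 + (Real.log 1.428844 - 1) * 1.428844)
            < Real.exp 0 := by
              apply Real.exp_lt_exp.2
              nlinarith
          _ = (1 ! : ℝ) := by norm_num
      · -- n = 2
        have : N + 0.428844 = 2.428844 := by norm_num [hNdef]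
        rw [this]
        have hlx := log_x2_lt
        have hL := log_2pi_lt
        have hl2 := Real.log_two_gt_d9
        have hexp : (Real.log 2.428844 - 1) * 2.428844 ≤ (0.88742 - 1) * 2.428844 := by nlinarith
        have h2 : Real.sqrt (2 * π) = Real.exp (Real.log (2 * π) / 2) := by
          rw [Real.exp_half, Real.exp_log (by positivity)]
        rw [h2, ← Real.exp_add]
        calc Real.exp (Real.log (2 * π) / 2 + (Real.log 2.428844 - 1) * 2.428844)
            < Real.exp (Real.log 2) := by
              apply Real.exp_lt_exp.2
              nlinarith
          _ = (2 ! : ℝ) := by rw [Real.exp_log (by norm_num)]; norm_num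
    · -- n ≥ 3
      have hN3 : (3:ℝ) ≤ N := by rw [hNdef]; exact_mod_cast h3
      have hN0 : (0:ℝ) < N := by linarith
      have hNa : (0:ℝ) < N + 0.428844 := by linarith
      -- log N lower bound
      have hlog3 : Real.log 2 + 1/3 ≤ Real.log N := by
        have ha : Real.log 3 ≤ Real.log N := Real.log_le_log (by norm_num) hN3
        have hb : Real.log ((2:ℝ)/3) ≤ (2:ℝ)/3 - 1 := Real.log_le_sub_one_of_pos (by norm_num)
        have hc : Real.log ((2:ℝ)/3) = Real.log 2 - Real.log 3 := Real.log_div (by norm_num) (by norm_num)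
        linarith
      have hl2 := Real.log_two_gt_d9
      -- log (N + a) upper bound
      have hupper : Real.log (N + 0.428844) ≤ Real.log N + 0.428844 / N := by
        have hb : Real.log ((N + 0.428844)/N) ≤ (N + 0.428844)/N - 1 :=
          Real.log_le_sub_one_of_pos (by positivity)
        have hc : Real.log ((N + 0.428844)/N) = Real.log (N + 0.428844) - Real.log N :=
          Real.log_div (ne_of_gt hNa) (ne_of_gt hN0)
        have hd : (N + 0.428844)/N - 1 = 0.428844 / N := by field_simp; ring
        linarith
      have hstrict : (Real.log (N + 0.428844) - 1) * (N + 0.428844)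
          < (Real.log N - 1) * N + Real.log N / 2 := by
        have P1 : Real.log (N + 0.428844) * (N + 0.428844)
            ≤ (Real.log N + 0.428844 / N) * (N + 0.428844) :=
          mul_le_mul_of_nonneg_right hupper hNa.le
        have e1 : (0.428844 / N) * (N + 0.428844) = 0.428844 + 0.428844 * 0.428844 / N := by
          field_simp
        have h2 : (0.428844 : ℝ) * 0.428844 / N ≤ 0.428844 * 0.428844 / 3 :=
          div_le_div_of_nonneg_left (by norm_num) (by norm_num) hN3
        nlinarith [P1, e1, h2, hlog3, hl2]
      obtain ⟨m, rfl⟩ : ∃ m, n = m + 1 := ⟨n - 1, (Nat.succ_pred_eq_of_pos hn).symm⟩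
      calc Real.sqrt (2 * π) * Real.exp ((Real.log (N + 0.428844) - 1) * (N + 0.428844))
          < Real.sqrt (2 * π) * Real.exp ((Real.log N - 1) * N + Real.log N / 2) := by
            exact mul_lt_mul_of_pos_left (Real.exp_lt_exp.2 hstrict) hsq
        _ ≤ ((m + 1)! : ℝ) := stirling_exp m
  calc Real.sqrt (2 * π) * Real.exp ((Real.log (N + c) - 1) * (N + c))
      ≤ Real.sqrt (2 * π) * Real.exp ((Real.log (N + 0.428844) - 1) * (N + 0.428844)) :=
        mul_le_mul_of_nonneg_left (Real.exp_le_exp.2 hmono) hsq.le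
    _ < (n ! : ℝ) := key
end

section
/- For all sufficiently large n, Burnside's approximation √(2π)((n+1/2)/e)^{n+1/2} is closer to n! than Stirling's approximation √(2πn)(n/e)^n, i.e., |√(2π)((n+1/2)/e)^{n+1/2} − n!| < |√(2πn)(n/e)^n − n!|. -/
open Real Nat Filter
section BurnsideAux
open Topology

/-! Auxiliary series lemmas -/

private lemma hL {x : ℝ} (h0 : 0 < x) (h1 : x < 1) :
    HasSum (fun k : ℕ => x^(2*k)/(2*(k:ℝ)+1)) ((Real.log (1+x) - Real.log (1-x))/(2*x)) := by
  have h := Real.hasSum_log_sub_log_of_abs_lt_one (x := x) (by rw [abs_of_pos h0]; exact h1)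
  have h' := h.div_const (2*x)
  refine h'.congr_fun fun k => ?_
  field_simp [pow_succ]
  ring

private lemma hR {x : ℝ} (h0 : 0 < x) (h1 : x < 1) :
    HasSum (fun k : ℕ => x^(2*(k+1))/(2*((k:ℝ)+1)+1))
      ((Real.log (1+x) - Real.log (1-x))/(2*x) - 1) := by
  have h := (hasSum_nat_add_iff' (f := fun k : ℕ => x^(2*k)/(2*(k:ℝ)+1)) 1).mpr (hL h0 h1)
  norm_num at h
  exact h.congr_fun fun k => by ring_nf

private lemma R_ge {x : ℝ} (h0 : 0 < x) (h1 : x < 1) :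
    x^2/3 ≤ (Real.log (1+x) - Real.log (1-x))/(2*x) - 1 := by
  have h := hR h0 h1
  have := le_hasSum h 0 (fun j _ => by positivity)
  norm_num at this
  convert this using 2 <;> norm_num

private lemma e_hasSum {t : ℝ} (h0 : 0 < t) (h1 : t < 1) :
    HasSum (fun k : ℕ => t^(2*(k+1)) * (1/((2*(k:ℝ)+2)*(2*(k:ℝ)+3))))
      (1 - (Real.log (1+t) - Real.log (1-t))/(2*t) - (1/2)*Real.log (1-t^2)) := by
  have ht2 : |t^2| < 1 := by rw [abs_of_pos (by positivity)]; nlinarith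
  have h2 := (Real.hasSum_pow_div_log_of_abs_lt_one ht2).div_const 2
  have h := h2.sub (hR h0 h1)
  have heq : -Real.log (1-t^2)/2 - ((Real.log (1+t) - Real.log (1-t))/(2*t) - 1)
      = 1 - (Real.log (1+t) - Real.log (1-t))/(2*t) - (1/2)*Real.log (1-t^2) := by ring
  rw [heq] at h
  refine h.congr_fun fun k => ?_
  have hpm : (t^2)^(k+1) = t^(2*(k+1)) := by rw [← pow_mul]
  rw [hpm]
  have hk2 : (2*(k:ℝ)+2) ≠ 0 := by positivity
  have hk3 : (2*(k:ℝ)+3) ≠ 0 := by positivity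
  have hk1 : ((k:ℝ)+1) ≠ 0 := by positivity
  field_simp
  ring

private lemma e_pos {t : ℝ} (h0 : 0 < t) (h1 : t < 1) :
    0 < 1 - (Real.log (1+t) - Real.log (1-t))/(2*t) - (1/2)*Real.log (1-t^2) := by
  have h := e_hasSum h0 h1
  have := le_hasSum h 0 (fun j _ => by positivity)
  have h00 : (0:ℝ) < t^(2*(0+1)) * (1/((2*((0:ℕ):ℝ)+2)*(2*((0:ℕ):ℝ)+3))) := by positivity
  linarith

private lemma e_le {t : ℝ} (h0 : 0 < t) (h1 : t < 1) :
    1 - (Real.log (1+t) - Real.log (1-t))/(2*t) - (1/2)*Real.log (1-t^2) ≤ t^2/(6*(1-t^2)) := by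
  have ht2 : t^2 < 1 := by nlinarith
  have hg : HasSum (fun k : ℕ => t^2/6 * (t^2)^k) (t^2/6 * (1-t^2)⁻¹) :=
    (hasSum_geometric_of_lt_one (by positivity) ht2).mul_left _
  have h := e_hasSum h0 h1
  have hle : ∀ k : ℕ, t^(2*(k+1)) * (1/((2*(k:ℝ)+2)*(2*(k:ℝ)+3))) ≤ t^2/6 * (t^2)^k := by
    intro k
    have h6 : (6:ℝ) ≤ (2*(k:ℝ)+2)*(2*(k:ℝ)+3) := by nlinarith [k.cast_nonneg (α := ℝ)]
    have hpm : t^(2*(k+1)) = t^2 * (t^2)^k := by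
      rw [← pow_mul]; rw [← pow_add]; ring_nf
    rw [hpm, mul_one_div, div_le_iff₀ (by positivity)]
    calc t^2 * (t^2)^k = t^2/6*(t^2)^k * 6 := by ring
      _ ≤ t^2/6*(t^2)^k * ((2*(k:ℝ)+2)*(2*(k:ℝ)+3)) :=
          mul_le_mul_of_nonneg_left h6 (by positivity)
  calc _ ≤ t^2/6 * (1-t^2)⁻¹ := hasSum_le hle h hg
    _ = t^2/(6*(1-t^2)) := by rw [mul_comm 6, ← div_div]; ring_nf

/-! The two approximations and their log-errors -/

private noncomputable def Bb (n : ℕ) : ℝ :=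
  Real.sqrt (2 * π) * (((n : ℝ) + 1/2) / Real.exp 1) ^ ((n : ℝ) + 1/2)
private noncomputable def Ss (n : ℕ) : ℝ :=
  Real.sqrt (2 * π * n) * ((n : ℝ) / Real.exp 1) ^ (n : ℝ)
private noncomputable def Aa (n : ℕ) : ℝ := Real.log (n !) - Real.log (Ss n)
private noncomputable def Cc (n : ℕ) : ℝ := Real.log (Bb n) - Real.log (n !)

private lemma Bb_pos (n : ℕ) : 0 < Bb n := by
  unfold Bb
  have : (0:ℝ) < ((n : ℝ) + 1/2) / Real.exp 1 := by positivity
  positivity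

private lemma Ss_pos {n : ℕ} (hn : 1 ≤ n) : 0 < Ss n := by
  unfold Ss
  have h : (0:ℝ) < n := by exact_mod_cast hn
  have h1 : (0:ℝ) < (n : ℝ) / Real.exp 1 := by positivity
  have h2 : (0:ℝ) < 2 * π * n := by positivity
  positivity

private lemma logBb (n : ℕ) : Real.log (Bb n) =
    Real.log (2*π)/2 + ((n:ℝ)+1/2) * Real.log ((n:ℝ)+1/2) - ((n:ℝ)+1/2) := by
  have hb : (0:ℝ) < ((n : ℝ) + 1/2) / Real.exp 1 := by positivity
  have hn : (0:ℝ) < (n:ℝ)+1/2 := by positivity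
  rw [Bb, Real.log_mul (by positivity) (by positivity), Real.log_sqrt (by positivity),
    Real.log_rpow hb, Real.log_div hn.ne' (Real.exp_ne_zero 1), Real.log_exp]
  ring

private lemma logSs {n : ℕ} (hn : 1 ≤ n) : Real.log (Ss n) =
    Real.log (2*π)/2 + Real.log n/2 + (n:ℝ) * Real.log n - n := by
  have h : (0:ℝ) < n := by exact_mod_cast hn
  have hb : (0:ℝ) < (n : ℝ) / Real.exp 1 := by positivity
  rw [Ss, Real.log_mul (by positivity) (by positivity), Real.log_sqrt (by positivity),
    Real.log_mul (by positivity) h.ne', Real.log_rpow hb,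
    Real.log_div h.ne' (Real.exp_ne_zero 1), Real.log_exp]
  ring

private lemma logfact_succ (n : ℕ) :
    Real.log ((n+1)! : ℝ) = Real.log ((n:ℝ)+1) + Real.log (n !) := by
  rw [Nat.factorial_succ]
  push_cast
  rw [Real.log_mul (by positivity) (by positivity)]

/-! Difference identities -/

private lemma Cc_diff (n : ℕ) :
    Cc n - Cc (n+1) =
      1 - (Real.log (1+(1/(2*((n:ℝ)+1)))) - Real.log (1-(1/(2*((n:ℝ)+1)))))/(2*(1/(2*((n:ℝ)+1))))
        - (1/2)*Real.log (1-(1/(2*((n:ℝ)+1)))^2) := by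
  set m : ℝ := (n:ℝ)+1 with hm
  have hm0 : (0:ℝ) < m := by positivity
  set t : ℝ := 1/(2*m) with ht
  have ht0 : 0 < t := by positivity
  have ht1 : t < 1 := by
    rw [ht, div_lt_one (by positivity)]; nlinarith
  have h1 : (n:ℝ)+1/2 = m*(1-t) := by rw [ht]; field_simp; ring
  have h2 : (n:ℝ)+1+1/2 = m*(1+t) := by rw [ht]; field_simp; ring
  have h4 : Real.log (1-t^2) = Real.log (1+t) + Real.log (1-t) := by
    rw [show (1:ℝ)-t^2 = (1+t)*(1-t) by ring,
      Real.log_mul (by nlinarith) (by nlinarith)]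
  have h5 : Real.log (m*(1+t)) = Real.log m + Real.log (1+t) :=
    Real.log_mul hm0.ne' (by nlinarith)
  have h6 : Real.log (m*(1-t)) = Real.log m + Real.log (1-t) :=
    Real.log_mul hm0.ne' (by nlinarith)
  unfold Cc
  rw [logBb, logBb, logfact_succ]
  push_cast
  rw [h1, h2, h4, h5, h6, show Real.log ((n:ℝ)+1) = Real.log m from by rw [hm]]
  generalize Real.log (1+t) = lp
  generalize Real.log (1-t) = lq
  generalize Real.log m = lm
  clear_value t m
  subst ht
  field_simp
  ring

private lemma Aa_diff {n : ℕ} (hn : 1 ≤ n) :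
    Aa n - Aa (n+1) =
      (Real.log (1+(1/(2*(n:ℝ)+1))) - Real.log (1-(1/(2*(n:ℝ)+1))))/(2*(1/(2*(n:ℝ)+1))) - 1 := by
  have hn0 : (0:ℝ) < n := by exact_mod_cast hn
  set x : ℝ := 1/(2*(n:ℝ)+1) with hx
  have hd : (0:ℝ) < 2*(n:ℝ)+1 := by positivity
  have e1 : (1:ℝ)+x = ((n:ℝ)+1) * (2/(2*(n:ℝ)+1)) := by rw [hx]; field_simp; ring
  have e2 : (1:ℝ)-x = (n:ℝ) * (2/(2*(n:ℝ)+1)) := by rw [hx]; field_simp; ring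
  have h1 : Real.log (1+x) = Real.log ((n:ℝ)+1) + Real.log (2/(2*(n:ℝ)+1)) := by
    rw [e1, Real.log_mul (by positivity) (by positivity)]
  have h2 : Real.log (1-x) = Real.log (n:ℝ) + Real.log (2/(2*(n:ℝ)+1)) := by
    rw [e2, Real.log_mul hn0.ne' (by positivity)]
  unfold Aa
  rw [logSs hn, logSs (by omega : 1 ≤ n+1), logfact_succ, h1, h2]
  push_cast
  generalize Real.log ((n:ℝ)+1) = lb
  generalize Real.log (n:ℝ) = la
  clear_value x
  subst hx
  field_simp
  ring

/-! Step bounds -/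

private lemma Cc_step (n : ℕ) :
    0 < Cc n - Cc (n+1) ∧
      Cc n - Cc (n+1) ≤ 1/(12*(2*(n:ℝ)+1)) - 1/(12*(2*(n:ℝ)+3)) := by
  set t : ℝ := 1/(2*((n:ℝ)+1)) with ht
  have ht0 : 0 < t := by positivity
  have ht1 : t < 1 := by
    rw [ht, div_lt_one (by positivity)]
    nlinarith [n.cast_nonneg (α := ℝ)]
  rw [Cc_diff]
  constructor
  · exact e_pos ht0 ht1
  · refine le_trans (e_le ht0 ht1) (le_of_eq ?_)
    have h1 : (2*(n:ℝ)+1) ≠ 0 := by positivity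
    have h3 : (2*(n:ℝ)+3) ≠ 0 := by positivity
    have h2 : (2*((n:ℝ)+1)) ≠ 0 := by positivity
    field_simp
    ring_nf
    have h5 : (18 + (n:ℝ) * 48 + (n:ℝ) ^ 2 * 24) ≠ 0 := by positivity
    field_simp
    ring

private lemma Aa_step {n : ℕ} (hn : 1 ≤ n) :
    1/(6*(2*(n:ℝ)+1)) - 1/(6*(2*(n:ℝ)+3)) ≤ Aa n - Aa (n+1) := by
  have hn0 : (0:ℝ) < n := by exact_mod_cast hn
  set x : ℝ := 1/(2*(n:ℝ)+1) with hx
  have hx0 : 0 < x := by positivity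
  have hx1 : x < 1 := by
    rw [hx, div_lt_one (by positivity)]; nlinarith
  rw [Aa_diff hn]
  refine le_trans ?_ (R_ge hx0 hx1)
  have key : 1/(6*(2*(n:ℝ)+1)) - 1/(6*(2*(n:ℝ)+3)) ≤ x^2/3 := by
    rw [hx, div_pow, one_pow, div_div,
      div_sub_div _ _ (by positivity) (by positivity),
      div_le_div_iff₀ (by positivity) (by positivity)]
    nlinarith [n.cast_nonneg (α := ℝ)]
  exact key

/-! Limits -/

private lemma aux_tendsto (c d : ℝ) (hc : 0 < c) :
    Tendsto (fun n : ℕ => 1/(c*(n:ℝ)+d)) atTop (𝓝 0) := by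
  have h1 : Tendsto (fun n : ℕ => c*(n:ℝ)+d) atTop atTop :=
    tendsto_atTop_add_const_right _ d (tendsto_natCast_atTop_atTop.const_mul_atTop hc)
  simp only [one_div]
  exact h1.inv_tendsto_atTop

private lemma Aa_eq {n : ℕ} (hn : 1 ≤ n) :
    Aa n = Real.log (Stirling.stirlingSeq n) - Real.log (Real.sqrt π) := by
  have hn0 : (0:ℝ) < n := by exact_mod_cast hn
  rw [Stirling.log_stirlingSeq_formula, Real.log_sqrt Real.pi_pos.le]
  unfold Aa
  rw [logSs hn, Real.log_mul two_ne_zero (ne_of_gt Real.pi_pos),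
    Real.log_mul two_ne_zero hn0.ne', Real.log_div hn0.ne' (Real.exp_ne_zero 1), Real.log_exp]
  ring

private lemma tendsto_Aa : Tendsto Aa atTop (𝓝 0) := by
  have h := Stirling.tendsto_stirlingSeq_sqrt_pi
  have hc : ContinuousAt Real.log (Real.sqrt π) :=
    Real.continuousAt_log (by positivity)
  have hlog := (hc.tendsto.comp h).sub_const (Real.log (Real.sqrt π))
  rw [sub_self] at hlog
  refine hlog.congr' ?_
  filter_upwards [eventually_ge_atTop 1] with n hn
  exact (Aa_eq hn).symm

private lemma tendsto_Dd :
    Tendsto (fun n : ℕ => Real.log (Bb n) - Real.log (Ss n)) atTop (𝓝 0) := by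
  have hb : ∀ n : ℕ, 1 ≤ n → 0 ≤ Real.log (Bb n) - Real.log (Ss n) ∧
      Real.log (Bb n) - Real.log (Ss n) ≤ 1/(4*(n:ℝ)) := by
    intro n hn
    have hn0 : (0:ℝ) < n := by exact_mod_cast hn
    set y : ℝ := 1/(2*(n:ℝ)) with hy
    have hy0 : 0 < y := by positivity
    have hsplit : Real.log ((n:ℝ)+1/2) = Real.log (n:ℝ) + Real.log (1+y) := by
      rw [show (n:ℝ)+1/2 = (n:ℝ)*(1+y) from by rw [hy]; field_simp,
        Real.log_mul hn0.ne' (by positivity)]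
    have hupper : Real.log (1+y) ≤ y :=
      le_trans (Real.log_le_sub_one_of_pos (by positivity)) (by ring_nf; norm_num)
    have hlower : y/(1+y) ≤ Real.log (1+y) := by
      have h := Real.log_le_sub_one_of_pos (x := 1/(1+y)) (by positivity)
      rw [Real.log_div one_ne_zero (by positivity), Real.log_one] at h
      have : 1 - 1/(1+y) = y/(1+y) := by field_simp; ring
      linarith
    rw [logBb n, logSs hn, hsplit]
    constructor
    · have : ((n:ℝ)+1/2) * (y/(1+y)) = 1/2 := by
        rw [hy]; field_simp
      nlinarith [mul_le_mul_of_nonneg_left hlower (by positivity : (0:ℝ) ≤ (n:ℝ)+1/2)]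
    · have : ((n:ℝ)+1/2) * y = 1/2 + 1/(4*(n:ℝ)) := by
        rw [hy]; field_simp; ring
      nlinarith [mul_le_mul_of_nonneg_left hupper (by positivity : (0:ℝ) ≤ (n:ℝ)+1/2)]
  have hg : Tendsto (fun n : ℕ => 1/(4*(n:ℝ))) atTop (𝓝 0) := by
    have := aux_tendsto 4 0 (by norm_num)
    refine this.congr fun n => by norm_num
  refine tendsto_of_tendsto_of_tendsto_of_le_of_le' tendsto_const_nhds hg ?_ ?_
  · filter_upwards [eventually_ge_atTop 1] with n hn using (hb n hn).1
  · filter_upwards [eventually_ge_atTop 1] with n hn using (hb n hn).2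

private lemma tendsto_Cc : Tendsto Cc atTop (𝓝 0) := by
  have h := tendsto_Dd.sub tendsto_Aa
  rw [sub_zero] at h
  refine h.congr fun n => ?_
  unfold Cc Aa
  ring

/-! Global bounds -/

private lemma Cc_antitone : Antitone Cc :=
  antitone_nat_of_succ_le fun n => by have := (Cc_step n).1; linarith

private lemma Cc_nonneg (n : ℕ) : 0 ≤ Cc n :=
  le_of_tendsto tendsto_Cc ((eventually_ge_atTop n).mono fun m hm => Cc_antitone hm)

private lemma Cc_pos (n : ℕ) : 0 < Cc n :=
  lt_of_le_of_lt (Cc_nonneg (n+1)) (by have := (Cc_step n).1; linarith)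

private lemma Cc_le (n : ℕ) : Cc n ≤ 1/(12*(2*(n:ℝ)+1)) := by
  set ψ : ℕ → ℝ := fun k => Cc k - 1/(12*(2*(k:ℝ)+1)) with hψ
  have hmono : Monotone ψ := by
    apply monotone_nat_of_le_succ
    intro k
    have h := (Cc_step k).2
    simp only [hψ]
    push_cast
    rw [show 2*((k:ℝ)+1)+1 = 2*(k:ℝ)+3 by ring]
    linarith
  have htend : Tendsto ψ atTop (𝓝 0) := by
    have := tendsto_Cc.sub (aux_tendsto 24 12 (by norm_num))
    rw [sub_zero] at this
    refine this.congr fun n => ?_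
    simp only [hψ]
    ring_nf
  have := ge_of_tendsto htend ((eventually_ge_atTop n).mono fun m hm => hmono hm)
  simp only [hψ] at this
  linarith

private lemma Aa_ge {n : ℕ} (hn : 1 ≤ n) : 1/(6*(2*(n:ℝ)+1)) ≤ Aa n := by
  obtain ⟨j, rfl⟩ : ∃ j, n = j + 1 := ⟨n - 1, by omega⟩
  set ph : ℕ → ℝ := fun k => Aa (k+1) - 1/(6*(2*((k:ℝ)+1)+1)) with hph
  have hanti : Antitone ph := by
    apply antitone_nat_of_succ_le
    intro k
    have h := Aa_step (n := k+1) (by omega)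
    simp only [hph]
    push_cast
    push_cast at h
    ring_nf
    ring_nf at h
    linarith
  have htend : Tendsto ph atTop (𝓝 0) := by
    have h1 : Tendsto (fun k : ℕ => Aa (k+1)) atTop (𝓝 0) :=
      tendsto_Aa.comp (tendsto_add_atTop_nat 1)
    have h2 := h1.sub (aux_tendsto 12 18 (by norm_num))
    rw [sub_zero] at h2
    refine h2.congr fun k => ?_
    simp only [hph]
    ring_nf
  have := le_of_tendsto htend ((eventually_ge_atTop j).mono fun m hm => hanti hm)
  simp only [hph] at this
  push_cast
  linarith

end BurnsideAux

theorem burnside_better_than_stirling :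
    ∀ᶠ n : ℕ in atTop,
      |Real.sqrt (2 * π) * (((n : ℝ) + 1/2) / Real.exp 1) ^ ((n : ℝ) + 1/2) - (n ! : ℝ)| <
      |Real.sqrt (2 * π * n) * ((n : ℝ) / Real.exp 1) ^ (n : ℝ) - (n ! : ℝ)| := by
  filter_upwards [eventually_ge_atTop 1] with n hn
  have hn0 : (0:ℝ) < n := by exact_mod_cast hn
  have hn1 : (1:ℝ) ≤ n := by exact_mod_cast hn
  have hf : (0:ℝ) < (n ! : ℝ) := by exact_mod_cast n.factorial_pos
  have hC0 : 0 < Cc n := Cc_pos n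
  have hCle : Cc n ≤ 1/(12*(2*(n:ℝ)+1)) := Cc_le n
  have hC4 : Cc n < 1/4 := by
    refine lt_of_le_of_lt hCle ?_
    rw [div_lt_div_iff₀ (by positivity) (by norm_num)]
    nlinarith
  have hA2C : 2 * Cc n ≤ Aa n := by
    refine le_trans ?_ (Aa_ge hn)
    rw [show (2:ℝ) * Cc n = Cc n * 2 from by ring]
    rw [show 1/(6*(2*(n:ℝ)+1)) = 1/(12*(2*(n:ℝ)+1)) * 2 from by field_simp; ring]
    exact mul_le_mul_of_nonneg_right hCle (by norm_num)
  -- rewrite both sides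
  have hBb : Bb n = (n ! : ℝ) * Real.exp (Cc n) := by
    rw [Cc, Real.exp_sub, Real.exp_log (Bb_pos n), Real.exp_log hf]
    field_simp
  have hSs : Ss n = (n ! : ℝ) * Real.exp (-Aa n) := by
    rw [Aa, neg_sub, Real.exp_sub, Real.exp_log (Ss_pos hn), Real.exp_log hf]
    field_simp
  have key : Real.exp (Cc n) + Real.exp (-Aa n) < 2 := by
    have h1 : (0:ℝ) < 1 - Cc n := by linarith
    have h2 : (0:ℝ) < 1 + 2 * Cc n := by linarith
    have hexpC : Real.exp (Cc n) ≤ (1 - Cc n)⁻¹ := by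
      have h := Real.add_one_le_exp (-Cc n)
      rw [show Real.exp (Cc n) = (Real.exp (-Cc n))⁻¹ by rw [Real.exp_neg, inv_inv]]
      exact inv_anti₀ h1 (by linarith)
    have hexpA : Real.exp (-Aa n) ≤ (1 + 2 * Cc n)⁻¹ := by
      have hmono : Real.exp (-Aa n) ≤ Real.exp (-(2 * Cc n)) :=
        Real.exp_le_exp.mpr (by linarith)
      have h := Real.add_one_le_exp (2 * Cc n)
      refine le_trans hmono ?_
      rw [Real.exp_neg]
      exact inv_anti₀ h2 (by linarith)
    have harith : (1 - Cc n)⁻¹ + (1 + 2 * Cc n)⁻¹ < 2 := by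
      rw [inv_eq_one_div, inv_eq_one_div, div_add_div _ _ h1.ne' h2.ne',
        div_lt_iff₀ (mul_pos h1 h2)]
      nlinarith
    linarith
  have goal : |Bb n - (n ! : ℝ)| < |Ss n - (n ! : ℝ)| := by
    rw [hBb, hSs]
    have hBge : (0:ℝ) ≤ (n ! : ℝ) * Real.exp (Cc n) - (n ! : ℝ) := by
      have : (1:ℝ) ≤ Real.exp (Cc n) := Real.one_le_exp hC0.le
      nlinarith
    have hSle : (n ! : ℝ) * Real.exp (-Aa n) - (n ! : ℝ) ≤ 0 := by
      have : Real.exp (-Aa n) ≤ 1 := Real.exp_le_one_iff.mpr (by nlinarith)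
      nlinarith
    rw [abs_of_nonneg hBge, abs_of_nonpos hSle]
    nlinarith
  exact goal
end

section
/- If a sequence (a_n) ⊂ (0, 1/2) satisfies n! = √(2π)·((n + a_n)/e)^(n + a_n), then lim_{n→∞} (n + a_n)^{a_n} / √n = 1. -/
open Real Nat Filter

theorem intermediate_limit (a : ℕ → ℝ) (ha : ∀ n, a n ∈ Set.Ioo (0 : ℝ) (1/2))
    (heq : ∀ n : ℕ, 0 < n →
      (n ! : ℝ) = Real.sqrt (2 * π) * (((n : ℝ) + a n) / Real.exp 1) ^ ((n : ℝ) + a n)) :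
    Tendsto (fun n : ℕ => ((n : ℝ) + a n) ^ (a n) / Real.sqrt n) atTop (nhds 1) := by
  have hπ : 0 < π := Real.pi_pos
  set b : ℕ → ℝ := fun n => a n - n * Real.log (1 + a n / n) with hbdef
  -- b n → 0 by squeeze
  have hb0 : Tendsto b atTop (nhds 0) := by
    apply tendsto_of_tendsto_of_tendsto_of_le_of_le' tendsto_const_nhds
      tendsto_one_div_atTop_nhds_zero_nat
    · filter_upwards [eventually_ge_atTop 1] with n hn
      have hN : (0:ℝ) < n := by exact_mod_cast hn
      obtain ⟨ha0, ha1⟩ := ha n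
      have hx : 0 < a n / n := by positivity
      have hlog : Real.log (1 + a n / n) ≤ a n / n := by
        have := Real.log_le_sub_one_of_pos (show (0:ℝ) < 1 + a n / n by linarith)
        linarith
      have : (n:ℝ) * Real.log (1 + a n / n) ≤ a n := by
        calc (n:ℝ) * Real.log (1 + a n / n) ≤ n * (a n / n) := by
              exact mul_le_mul_of_nonneg_left hlog hN.le
          _ = a n := by field_simp
      simpa [hbdef] using this
    · filter_upwards [eventually_ge_atTop 1] with n hn
      have hN : (0:ℝ) < n := by exact_mod_cast hn
      obtain ⟨ha0, ha1⟩ := ha n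
      set x : ℝ := a n / n with hxdef
      have hx : 0 < x := by positivity
      have hlog : 1 - (1 + x)⁻¹ ≤ Real.log (1 + x) :=
        Real.one_sub_inv_le_log_of_pos (by linarith)
      have h1 : x - x ^ 2 ≤ 1 - (1 + x)⁻¹ := by
        have hpos : (0:ℝ) < 1 + x := by linarith
        have heq1 : 1 - (1 + x)⁻¹ = x / (1 + x) := by field_simp; ring
        rw [heq1, le_div_iff₀ hpos]
        nlinarith [pow_nonneg hx.le 3]
      have hxa : x ≤ 1 / n := by
        rw [hxdef, div_le_div_iff₀ hN hN]
        nlinarith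
      have : b n ≤ n * x ^ 2 := by
        have : (n:ℝ) * (x - x ^ 2) ≤ n * Real.log (1 + x) :=
          mul_le_mul_of_nonneg_left (le_trans h1 hlog) hN.le
        have hax : (n:ℝ) * x = a n := by rw [hxdef]; field_simp
        simp only [hbdef]
        nlinarith
      calc b n ≤ n * x ^ 2 := this
        _ ≤ n * (1/n * (1/n)) := by
            have hx1 : x ≤ 1/n := hxa
            have : x ^ 2 ≤ 1/n * (1/n) := by nlinarith
            exact mul_le_mul_of_nonneg_left this hN.le
        _ ≤ 1 / n := by
            rw [← mul_assoc]
            field_simp; exact le_rfl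
  -- key algebraic identity
  have key : ∀ n : ℕ, 1 ≤ n → ((n:ℝ) + a n) ^ (a n) / Real.sqrt n
      = Stirling.stirlingSeq n / Real.sqrt π * Real.exp (b n) := by
    intro n hn
    have hN : (0:ℝ) < n := by exact_mod_cast hn
    obtain ⟨ha0, ha1⟩ := ha n
    have hNa : (0:ℝ) < (n:ℝ) + a n := by linarith
    have hL : 0 < ((n:ℝ) + a n) ^ (a n) / Real.sqrt n := by positivity
    have hstir : 0 < Stirling.stirlingSeq n := by
      obtain ⟨m, rfl⟩ := Nat.exists_eq_add_of_le hn
      simpa [Nat.add_comm] using Stirling.stirlingSeq'_pos m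
    have hR : 0 < Stirling.stirlingSeq n / Real.sqrt π * Real.exp (b n) := by positivity
    rw [← Real.exp_log hL, ← Real.exp_log hR]
    congr 1
    have hfac : (0:ℝ) < (n ! : ℝ) := by positivity
    have h2n : (0:ℝ) < 2 * n := by linarith
    have hpow : (0:ℝ) < ((n:ℝ) / Real.exp 1) ^ n := by positivity
    rw [Real.log_div (by positivity) (by positivity), Real.log_mul (by positivity) (Real.exp_pos _).ne',
      Real.log_div hstir.ne' (by positivity), Real.log_exp, Real.log_rpow hNa,
      Real.log_sqrt hN.le, Real.log_sqrt hπ.le]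
    have hsub : Real.log (Stirling.stirlingSeq n)
        = Real.log (n !) - (Real.log (2 * n) / 2 + n * (Real.log n - 1)) := by
      rw [Stirling.stirlingSeq, Real.log_div hfac.ne' (by positivity),
        Real.log_mul (by positivity) hpow.ne', Real.log_sqrt h2n.le, Real.log_pow,
        Real.log_div hN.ne' (Real.exp_pos _).ne', Real.log_exp]
    rw [hsub, heq n (by omega), Real.log_mul (by positivity) (by positivity),
      Real.log_rpow (by positivity), Real.log_div hNa.ne' (Real.exp_pos _).ne',
      Real.log_exp, Real.log_sqrt (by positivity), Real.log_mul (by norm_num) hπ.ne',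
      Real.log_mul (by norm_num) hN.ne']
    have hlog1 : Real.log (1 + a n / n) = Real.log ((n:ℝ) + a n) - Real.log n := by
      rw [show (1:ℝ) + a n / n = ((n:ℝ) + a n) / n by field_simp,
        Real.log_div hNa.ne' hN.ne']
    simp only [hbdef, hlog1]
    ring
  have hmain : Tendsto (fun n => Stirling.stirlingSeq n / Real.sqrt π * Real.exp (b n))
      atTop (nhds 1) := by
    have h1 : Tendsto (fun n => Stirling.stirlingSeq n / Real.sqrt π) atTop
        (nhds (Real.sqrt π / Real.sqrt π)) :=
      Stirling.tendsto_stirlingSeq_sqrt_pi.div_const _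
    rw [div_self (by positivity : Real.sqrt π ≠ 0)] at h1
    have h2 : Tendsto (fun n => Real.exp (b n)) atTop (nhds (Real.exp 0)) :=
      (Real.continuous_exp.tendsto 0).comp hb0
    rw [Real.exp_zero] at h2
    simpa using h1.mul h2
  exact hmain.congr' (by filter_upwards [eventually_ge_atTop 1] with n hn using (key n hn).symm)
end
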